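/- arXiv:1205.2300 — 4 statements merged into one kernel-verified Lean document; each statement's English description precedes it below -/
import Mathlib

section
/- Let s ≥ 2 and t ≥ 1 be integers and α ≥ 0. Let Ω be a finite probability space carrying random variables X : Ω → [s], uniformly distributed, and Y₁, …, Y_t : Ω → {0, 1}, and let X̂ = g(Y₁, …, Y_t) for some function g : {0,1}^t → [s]. Assume that for every j ∈ [t], the conditional Shannon entropy (base 2) satisfies H(Y_j | Y₁, …, Y_{j−1}, X) ≥ 1 − 4α². Then Pr[X̂ ≠ X] ≥ 1 − (4α²·t + 1)/log₂ s. -/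
open scoped ComplexOrder Matrix BigOperators Kronecker
open MeasureTheory

noncomputable section

open Classical in
/-- Probability of the event `E` under the weight function `p` on a finite space. -/
def pr {Ω : Type*} [Fintype Ω] (p : Ω → ℝ) (E : Ω → Prop) : ℝ :=
  ∑ ω, if E ω then p ω else 0

/-- Conditional Shannon entropy (base 2) `H(U | V)` of finitely-valued random
variables on a finite probability space with weights `p`. -/
def condEnt {Ω α β : Type*} [Fintype Ω] [Fintype α] [Fintype β]
    (p : Ω → ℝ) (U : Ω → α) (V : Ω → β) : ℝ :=
  ∑ u : α, ∑ v : β,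
    -(pr p fun ω => U ω = u ∧ V ω = v) *
      Real.logb 2 ((pr p fun ω => U ω = u ∧ V ω = v) / (pr p fun ω => V ω = v))

section PR
open Classical
variable {Ω : Type*} [Fintype Ω] {p : Ω → ℝ}

lemma pr_nonneg (hp0 : ∀ ω, 0 ≤ p ω) (E : Ω → Prop) : 0 ≤ pr p E := by
  refine Finset.sum_nonneg fun ω _ => ?_
  split_ifs with h
  · exact hp0 ω
  · exact le_rfl

lemma pr_congr {E F : Ω → Prop} (h : ∀ ω, E ω ↔ F ω) : pr p E = pr p F := by
  unfold pr
  refine Finset.sum_congr rfl fun ω _ => ?_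
  by_cases hE : E ω
  · rw [if_pos hE, if_pos ((h ω).1 hE)]
  · rw [if_neg hE, if_neg (fun hF => hE ((h ω).2 hF))]

lemma pr_mono (hp0 : ∀ ω, 0 ≤ p ω) {E F : Ω → Prop} (h : ∀ ω, E ω → F ω) :
    pr p E ≤ pr p F := by
  refine Finset.sum_le_sum fun ω _ => ?_
  by_cases hE : E ω
  · rw [if_pos hE, if_pos (h ω hE)]
  · rw [if_neg hE]; split_ifs; exacts [hp0 ω, le_rfl]

lemma pr_false {E : Ω → Prop} (h : ∀ ω, ¬ E ω) : pr p E = 0 := by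
  unfold pr
  refine Finset.sum_eq_zero fun ω _ => if_neg (h ω)

lemma pr_true (hp1 : ∑ ω, p ω = 1) : pr p (fun _ => True) = 1 := by
  unfold pr; simpa using hp1

lemma pr_sum_fiber {α : Type*} [Fintype α] (U : Ω → α) (E : Ω → Prop) :
    ∑ u, pr p (fun ω => U ω = u ∧ E ω) = pr p E := by
  unfold pr
  rw [Finset.sum_comm]
  refine Finset.sum_congr rfl fun ω _ => ?_
  by_cases hE : E ω
  · simp only [hE, and_true]
    rw [Finset.sum_ite_eq Finset.univ (U ω) (fun _ => p ω), if_pos (Finset.mem_univ _)]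
    simp [hE]
  · simp [hE]

end PR


-- Gibbs / max-entropy bound for one conditional slice
lemma gibbs_slice {α : Type*} [Fintype α] (q : α → ℝ) (Q : ℝ)
    (hq0 : ∀ u, 0 ≤ q u) (hsum : ∑ u, q u = Q) :
    ∑ u, -(q u) * Real.logb 2 (q u / Q) ≤ Q * Real.logb 2 (Fintype.card α) := by
  rcases isEmpty_or_nonempty α with h | h
  · simp only [Finset.univ_eq_empty, Finset.sum_empty] at hsum ⊢
    simp [← hsum]
  by_cases hQ : Q = 0
  · have hz : ∀ u ∈ Finset.univ, q u = 0 := by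
      rw [← Finset.sum_eq_zero_iff_of_nonneg (fun u _ => hq0 u), hsum, hQ]
    have : ∀ u : α, q u = 0 := fun u => hz u (Finset.mem_univ u)
    simp [this, hQ]
  have hQ0 : 0 ≤ Q := hsum ▸ Finset.sum_nonneg (fun u _ => hq0 u)
  have hQpos : 0 < Q := lt_of_le_of_ne hQ0 (Ne.symm hQ)
  set n : ℝ := (Fintype.card α : ℝ) with hn
  have hnpos : (0:ℝ) < n := by
    simp only [hn]
    exact_mod_cast Fintype.card_pos
  have hlog2 : (0:ℝ) < Real.log 2 := Real.log_pos one_lt_two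
  have key : ∀ u, -(q u) * Real.logb 2 (q u / Q) ≤
      (Q/n - q u)/Real.log 2 + q u * Real.logb 2 n := by
    intro u
    rcases eq_or_lt_of_le (hq0 u) with h0 | h0
    · rw [← h0]
      simp only [neg_zero, zero_mul, add_zero, sub_zero]
      exact div_nonneg (div_nonneg hQ0 (le_of_lt hnpos)) (le_of_lt hlog2)
    · have hQn : 0 < Q / (n * q u) := by positivity
      have hlb : Real.log (Q / (n * q u)) ≤ Q / (n * q u) - 1 :=
        Real.log_le_sub_one_of_pos hQn
      have e1 : -(q u) * Real.logb 2 (q u / Q) = q u * Real.logb 2 (Q / q u) := by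
        rw [Real.logb_div (ne_of_gt h0) (ne_of_gt hQpos),
            Real.logb_div (ne_of_gt hQpos) (ne_of_gt h0)]
        ring
      rw [e1]
      have e2 : Real.logb 2 (Q / q u) = Real.logb 2 (Q / (n * q u)) + Real.logb 2 n := by
        rw [← Real.logb_mul (ne_of_gt hQn) (ne_of_gt hnpos)]
        congr 1
        field_simp
      rw [e2, mul_add]
      have : q u * Real.logb 2 (Q / (n * q u)) ≤ (Q/n - q u)/Real.log 2 := by
        rw [Real.logb, div_eq_mul_inv (Real.log _), ← mul_assoc]
        rw [div_eq_mul_inv (Q/n - q u)]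
        refine mul_le_mul_of_nonneg_right ?_ (by positivity)
        calc q u * Real.log (Q / (n * q u)) ≤ q u * (Q / (n * q u) - 1) :=
              mul_le_mul_of_nonneg_left hlb (le_of_lt h0)
          _ = Q/n - q u := by field_simp
      linarith
  calc ∑ u, -(q u) * Real.logb 2 (q u / Q)
      ≤ ∑ u, ((Q/n - q u)/Real.log 2 + q u * Real.logb 2 n) :=
        Finset.sum_le_sum fun u _ => key u
    _ = ((Fintype.card α : ℝ) * (Q/n) - Q)/Real.log 2 + Q * Real.logb 2 n := by
        rw [Finset.sum_add_distrib, ← Finset.sum_div, ← Finset.sum_mul, hsum]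
        congr 2
        rw [Finset.sum_sub_distrib, hsum, Finset.sum_const, Finset.card_univ,
          nsmul_eq_mul]
    _ = Q * Real.logb 2 n := by
        rw [← hn]
        have : n * (Q / n) - Q = 0 := by field_simp; ring
        rw [this, zero_div, zero_add]

section CE
open Classical
variable {Ω α β : Type*} [Fintype Ω] [Fintype α] [Fintype β] {p : Ω → ℝ}

lemma condEnt_nonneg (hp0 : ∀ ω, 0 ≤ p ω) (U : Ω → α) (V : Ω → β) :
    0 ≤ condEnt p U V := by
  refine Finset.sum_nonneg fun u _ => Finset.sum_nonneg fun v _ => ?_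
  set a := pr p fun ω => U ω = u ∧ V ω = v with ha
  set b := pr p fun ω => V ω = v with hb
  have ha0 : 0 ≤ a := pr_nonneg hp0 _
  have hab : a ≤ b := pr_mono hp0 fun ω h => h.2
  rcases eq_or_lt_of_le ha0 with h0 | h0
  · rw [← h0]; simp
  · have hbpos : 0 < b := lt_of_lt_of_le h0 hab
    have hr1 : a / b ≤ 1 := (div_le_one hbpos).2 hab
    have hlog : Real.logb 2 (a / b) ≤ 0 :=
      Real.logb_nonpos one_lt_two (le_of_lt (by positivity)) hr1
    nlinarith

/-- Fano-type bound: if `U` is determined by `V` outside the event `B ∘ V`,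
then `H(U|V) ≤ Pr[B ∘ V] · log₂ |α|`. -/
lemma condEnt_le_of_det (hp0 : ∀ ω, 0 ≤ p ω)
    (U : Ω → α) (V : Ω → β) (B : β → Prop) (f : β → α)
    (hdet : ∀ ω, ¬ B (V ω) → U ω = f (V ω)) :
    condEnt p U V ≤ pr p (fun ω => B (V ω)) * Real.logb 2 (Fintype.card α) := by
  have hprB : pr p (fun ω => B (V ω)) =
      ∑ v, (if B v then pr p (fun ω => V ω = v) else 0) := by
    rw [← pr_sum_fiber V (fun ω => B (V ω))]
    refine Finset.sum_congr rfl fun v _ => ?_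
    by_cases hB : B v
    · rw [if_pos hB]
      refine pr_congr fun ω => ?_
      constructor
      · rintro ⟨h1, _⟩; exact h1
      · intro h1; exact ⟨h1, h1 ▸ hB⟩
    · rw [if_neg hB]
      exact pr_false fun ω => by rintro ⟨h1, h2⟩; exact hB (h1 ▸ h2)
  rw [condEnt, Finset.sum_comm, hprB, Finset.sum_mul]
  refine Finset.sum_le_sum fun v _ => ?_
  by_cases hB : B v
  · rw [if_pos hB]
    exact gibbs_slice _ _ (fun u => pr_nonneg hp0 _) (pr_sum_fiber U _)
  · rw [if_neg hB, zero_mul]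
    refine le_of_eq (Finset.sum_eq_zero fun u _ => ?_)
    by_cases hu : u = f v
    · have : pr p (fun ω => U ω = u ∧ V ω = v) = pr p (fun ω => V ω = v) := by
        refine pr_congr fun ω => ?_
        constructor
        · rintro ⟨_, h2⟩; exact h2
        · intro h2; exact ⟨by rw [hu, ← h2]; exact hdet ω (h2 ▸ hB), h2⟩
      rw [this]
      by_cases hb : pr p (fun ω => V ω = v) = 0
      · rw [hb]; ring
      · rw [div_self hb, Real.logb_one, mul_zero]
    · have : pr p (fun ω => U ω = u ∧ V ω = v) = 0 := by
        refine pr_false fun ω => ?_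
        rintro ⟨h1, h2⟩
        apply hu
        rw [← h1, hdet ω (by rw [h2]; exact hB), h2]
      rw [this, neg_zero, zero_mul]
end CE

section CHAIN
open Classical
variable {Ω α α' β β' γ : Type*} [Fintype Ω] [Fintype α] [Fintype α'] [Fintype β]
  [Fintype β'] [Fintype γ] {p : Ω → ℝ}

-- per-triple log identity
private lemma log_split {a b c : ℝ} (ha : 0 ≤ a) (hab : a ≤ b) (hbc : b ≤ c) :
    -a * Real.logb 2 (a / c) =
      -a * Real.logb 2 (b / c) + -a * Real.logb 2 (a / b) := by
  rcases eq_or_lt_of_le ha with h0 | h0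
  · rw [← h0]; simp
  · have hb : 0 < b := lt_of_lt_of_le h0 hab
    have hc : 0 < c := lt_of_lt_of_le hb hbc
    rw [Real.logb_div (ne_of_gt h0) (ne_of_gt hc),
        Real.logb_div (ne_of_gt hb) (ne_of_gt hc),
        Real.logb_div (ne_of_gt h0) (ne_of_gt hb)]
    ring

/-- Chain rule: `H((W,U)|V) = H(W|V) + H(U|(V,W))`. -/
lemma condEnt_chain (hp0 : ∀ ω, 0 ≤ p ω)
    (U : Ω → α) (W : Ω → γ) (V : Ω → β) :
    condEnt p (fun ω => (W ω, U ω)) V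
      = condEnt p W V + condEnt p U (fun ω => (V ω, W ω)) := by
  have J : γ → α → β → ℝ := fun w u v => pr p fun ω => W ω = w ∧ U ω = u ∧ V ω = v
  -- LHS
  have hL : condEnt p (fun ω => (W ω, U ω)) V =
      ∑ w, ∑ u, ∑ v, -(pr p fun ω => W ω = w ∧ U ω = u ∧ V ω = v) *
        Real.logb 2 ((pr p fun ω => W ω = w ∧ U ω = u ∧ V ω = v) /
          (pr p fun ω => V ω = v)) := by
    rw [condEnt, Fintype.sum_prod_type]
    refine Finset.sum_congr rfl fun w _ => Finset.sum_congr rfl fun u _ =>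
      Finset.sum_congr rfl fun v _ => ?_
    have : (pr p fun ω => (W ω, U ω) = (w, u) ∧ V ω = v) =
        (pr p fun ω => W ω = w ∧ U ω = u ∧ V ω = v) := by
      refine pr_congr fun ω => ?_
      rw [Prod.mk.injEq]; tauto
    rw [this]
  -- first RHS term
  have hR1 : condEnt p W V =
      ∑ w, ∑ u, ∑ v, -(pr p fun ω => W ω = w ∧ U ω = u ∧ V ω = v) *
        Real.logb 2 ((pr p fun ω => W ω = w ∧ V ω = v) /
          (pr p fun ω => V ω = v)) := by
    rw [condEnt]
    refine Finset.sum_congr rfl fun w _ => ?_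
    rw [Finset.sum_comm]
    refine Finset.sum_congr rfl fun v _ => ?_
    have hfib : (pr p fun ω => W ω = w ∧ V ω = v) =
        ∑ u, pr p fun ω => W ω = w ∧ U ω = u ∧ V ω = v := by
      rw [← pr_sum_fiber U (fun ω => W ω = w ∧ V ω = v)]
      exact Finset.sum_congr rfl fun u _ => pr_congr fun ω => by tauto
    rw [neg_mul, hfib, Finset.sum_mul, ← Finset.sum_neg_distrib]
    exact Finset.sum_congr rfl fun u _ => by rw [neg_mul]
  -- second RHS term
  have hR2 : condEnt p U (fun ω => (V ω, W ω)) =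
      ∑ w, ∑ u, ∑ v, -(pr p fun ω => W ω = w ∧ U ω = u ∧ V ω = v) *
        Real.logb 2 ((pr p fun ω => W ω = w ∧ U ω = u ∧ V ω = v) /
          (pr p fun ω => W ω = w ∧ V ω = v)) := by
    rw [condEnt]
    rw [Finset.sum_comm]
    rw [Fintype.sum_prod_type]
    rw [Finset.sum_comm]
    refine Finset.sum_congr rfl fun w _ => ?_
    rw [Finset.sum_comm]
    refine Finset.sum_congr rfl fun u _ => Finset.sum_congr rfl fun v _ => ?_
    have e1 : (pr p fun ω => U ω = u ∧ (V ω, W ω) = (v, w)) =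
        (pr p fun ω => W ω = w ∧ U ω = u ∧ V ω = v) := by
      refine pr_congr fun ω => ?_
      rw [Prod.mk.injEq]; tauto
    have e2 : (pr p fun ω => (V ω, W ω) = (v, w)) =
        (pr p fun ω => W ω = w ∧ V ω = v) := by
      refine pr_congr fun ω => ?_
      rw [Prod.mk.injEq]; tauto
    rw [e1, e2]
  rw [hL, hR1, hR2, ← Finset.sum_add_distrib]
  refine Finset.sum_congr rfl fun w _ => ?_
  rw [← Finset.sum_add_distrib]
  refine Finset.sum_congr rfl fun u _ => ?_
  rw [← Finset.sum_add_distrib]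
  refine Finset.sum_congr rfl fun v _ => ?_
  exact log_split (pr_nonneg hp0 _)
    (pr_mono hp0 fun ω h => ⟨h.1, h.2.2⟩)
    (pr_mono hp0 fun ω h => h.2)

/-- `condEnt` is invariant under injective recoding of `U`. -/
lemma condEnt_comp_left (hp0 : ∀ ω, 0 ≤ p ω)
    (U : Ω → α) (V : Ω → β) (e : α → α') (he : Function.Injective e) :
    condEnt p (fun ω => e (U ω)) V = condEnt p U V := by
  rw [condEnt, condEnt]
  set F : α' → ℝ := fun a' => ∑ v, -(pr p fun ω => e (U ω) = a' ∧ V ω = v) *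
        Real.logb 2 ((pr p fun ω => e (U ω) = a' ∧ V ω = v) / (pr p fun ω => V ω = v))
    with hF
  have h1 : ∑ a' : α', F a' = ∑ a' ∈ Finset.univ.image e, F a' := by
    refine (Finset.sum_subset (Finset.subset_univ _) ?_).symm
    intro a' _ hnm
    refine Finset.sum_eq_zero fun v _ => ?_
    have : (pr p fun ω => e (U ω) = a' ∧ V ω = v) = 0 := by
      refine pr_false fun ω => ?_
      rintro ⟨h1, _⟩
      exact hnm (Finset.mem_image.2 ⟨U ω, Finset.mem_univ _, h1⟩)
    rw [this, neg_zero, zero_mul]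
  have h2 : ∑ a' ∈ Finset.univ.image e, F a' = ∑ a, F (e a) :=
    Finset.sum_image (fun a _ b _ hab => he hab)
  rw [show (∑ u : α', ∑ v : β,
      -(pr p fun ω => e (U ω) = u ∧ V ω = v) *
        Real.logb 2 ((pr p fun ω => e (U ω) = u ∧ V ω = v) / (pr p fun ω => V ω = v)))
      = ∑ a' : α', F a' from rfl, h1, h2]
  refine Finset.sum_congr rfl fun a _ => Finset.sum_congr rfl fun v _ => ?_
  have : (pr p fun ω => e (U ω) = e a ∧ V ω = v) =
      (pr p fun ω => U ω = a ∧ V ω = v) := by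
    refine pr_congr fun ω => ?_
    exact and_congr_left fun _ => ⟨fun h => he h, fun h => by rw [h]⟩
  rw [this]

/-- `condEnt` is invariant under injective recoding of `V`. -/
lemma condEnt_comp_right (hp0 : ∀ ω, 0 ≤ p ω)
    (U : Ω → α) (V : Ω → β) (e : β → β') (he : Function.Injective e) :
    condEnt p U (fun ω => e (V ω)) = condEnt p U V := by
  rw [condEnt, condEnt]
  refine Finset.sum_congr rfl fun u _ => ?_
  set F : β' → ℝ := fun b' => -(pr p fun ω => U ω = u ∧ e (V ω) = b') *
        Real.logb 2 ((pr p fun ω => U ω = u ∧ e (V ω) = b') /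
          (pr p fun ω => e (V ω) = b')) with hF
  have h1 : ∑ b' : β', F b' = ∑ b' ∈ Finset.univ.image e, F b' := by
    refine (Finset.sum_subset (Finset.subset_univ _) ?_).symm
    intro b' _ hnm
    have : (pr p fun ω => U ω = u ∧ e (V ω) = b') = 0 := by
      refine pr_false fun ω => ?_
      rintro ⟨_, h2⟩
      exact hnm (Finset.mem_image.2 ⟨V ω, Finset.mem_univ _, h2⟩)
    simp only [F, this, neg_zero, zero_mul]
  have h2 : ∑ b' ∈ Finset.univ.image e, F b' = ∑ b, F (e b) :=
    Finset.sum_image (fun a _ b _ hab => he hab)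
  rw [show (∑ v : β',
      -(pr p fun ω => U ω = u ∧ e (V ω) = v) *
        Real.logb 2 ((pr p fun ω => U ω = u ∧ e (V ω) = v) /
          (pr p fun ω => e (V ω) = v))) = ∑ b' : β', F b' from rfl, h1, h2]
  refine Finset.sum_congr rfl fun b _ => ?_
  have e1 : (pr p fun ω => U ω = u ∧ e (V ω) = e b) =
      (pr p fun ω => U ω = u ∧ V ω = b) := by
    refine pr_congr fun ω => ?_
    exact and_congr_right fun _ => ⟨fun h => he h, fun h => by rw [h]⟩
  have e2 : (pr p fun ω => e (V ω) = e b) = (pr p fun ω => V ω = b) := by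
    refine pr_congr fun ω => ?_
    exact ⟨fun h => he h, fun h => by rw [h]⟩
  simp only [F, e1, e2]

/-- Adjoining a component of `U` determined by `(U, V)` does not change `H(U|V)`. -/
lemma condEnt_pair_det {δ : Type*} [Fintype δ] (hp0 : ∀ ω, 0 ≤ p ω)
    (U : Ω → α) (V : Ω → β) (f : α → β → δ) :
    condEnt p (fun ω => (U ω, f (U ω) (V ω))) V = condEnt p U V := by
  rw [condEnt, condEnt, Fintype.sum_prod_type]
  refine Finset.sum_congr rfl fun u _ => ?_
  rw [Finset.sum_comm]
  refine Finset.sum_congr rfl fun v _ => ?_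
  have hterm : ∀ d, -(pr p fun ω => (U ω, f (U ω) (V ω)) = (u, d) ∧ V ω = v) *
      Real.logb 2 ((pr p fun ω => (U ω, f (U ω) (V ω)) = (u, d) ∧ V ω = v) /
        (pr p fun ω => V ω = v)) =
      if d = f u v then
        -(pr p fun ω => U ω = u ∧ V ω = v) *
          Real.logb 2 ((pr p fun ω => U ω = u ∧ V ω = v) / (pr p fun ω => V ω = v))
      else 0 := by
    intro d
    by_cases hd : d = f u v
    · rw [if_pos hd]
      have : (pr p fun ω => (U ω, f (U ω) (V ω)) = (u, d) ∧ V ω = v) =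
          (pr p fun ω => U ω = u ∧ V ω = v) := by
        refine pr_congr fun ω => ?_
        rw [Prod.mk.injEq]
        constructor
        · rintro ⟨⟨h1, _⟩, h3⟩; exact ⟨h1, h3⟩
        · rintro ⟨h1, h3⟩; exact ⟨⟨h1, by rw [h1, h3, hd]⟩, h3⟩
      rw [this]
    · rw [if_neg hd]
      have : (pr p fun ω => (U ω, f (U ω) (V ω)) = (u, d) ∧ V ω = v) = 0 := by
        refine pr_false fun ω => ?_
        rw [Prod.mk.injEq]
        rintro ⟨⟨h1, h2⟩, h3⟩
        exact hd (by rw [← h2, h1, h3])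
      rw [this, neg_zero, zero_mul]
  rw [Finset.sum_congr rfl fun d _ => hterm d]
  rw [Finset.sum_ite_eq' Finset.univ (f u v)
    (fun _ => -(pr p fun ω => U ω = u ∧ V ω = v) *
      Real.logb 2 ((pr p fun ω => U ω = u ∧ V ω = v) / (pr p fun ω => V ω = v)))]
  rw [if_pos (Finset.mem_univ _)]
end CHAIN

section CONGR
variable {Ω α β : Type*} [Fintype Ω] [Fintype α] [Fintype β] {p : Ω → ℝ}

lemma condEnt_congr {U U' : Ω → α} {V V' : Ω → β}
    (hU : ∀ ω, U ω = U' ω) (hV : ∀ ω, V ω = V' ω) :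
    condEnt p U V = condEnt p U' V' := by
  rw [funext hU, funext hV]
end CONGR



lemma swap_inj {a b : Type*} : Function.Injective (fun x : a × b => (x.2, x.1)) := by
  rintro ⟨x1, x2⟩ ⟨y1, y2⟩ h
  simp only [Prod.mk.injEq] at h ⊢
  exact ⟨h.2, h.1⟩

lemma unit_pair_inj {a : Type*} : Function.Injective (fun x : a => ((), x)) := by
  intro x y h
  simpa using congrArg Prod.snd h

lemma snoc_pair_inj {k : ℕ} :
    Function.Injective (fun x : (Fin k → Bool) × Bool => (Fin.snoc x.1 x.2 : Fin (k+1) → Bool)) := by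
  rintro ⟨w1, u1⟩ ⟨w2, u2⟩ h
  simp only at h
  have hu : u1 = u2 := by
    have := congrFun h (Fin.last k)
    simpa [Fin.snoc_last] using this
  have hw : w1 = w2 := by
    funext j
    have := congrFun h (Fin.castSucc j)
    simpa [Fin.snoc_castSucc] using this
  simp [hu, hw]


/-- **Fano-type lower bound for adaptive binary measurements** (information-
theoretic core of Lemma 4 of "Quantum Tomography via Compressed Sensing").

If `X` is uniform on `[s]`, `Y₁, …, Y_t` are binary random variables with
`H(Y_j | Y₁, …, Y_{j-1}, X) ≥ 1 - 4α²` for each `j`, and `X̂ = g(Y₁, …, Y_t)`,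
then `Pr[X̂ ≠ X] ≥ 1 - (4α²t + 1)/log₂ s`. -/
theorem fano_lower_bound
    {Ω : Type*} [Fintype Ω] (s t : ℕ) (hs : 2 ≤ s) (ht : 1 ≤ t)
    (α : ℝ) (hα : 0 ≤ α)
    (p : Ω → ℝ) (hp0 : ∀ ω, 0 ≤ p ω) (hp1 : ∑ ω, p ω = 1)
    (X : Ω → Fin s) (hX : ∀ x, pr p (fun ω => X ω = x) = 1 / (s : ℝ))
    (Y : Fin t → Ω → Bool) (g : (Fin t → Bool) → Fin s)
    (hent : ∀ j : Fin t,
      1 - 4 * α ^ 2 ≤ condEnt p (Y j)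
        (fun ω => ((fun i : Fin j.1 => Y ⟨i.1, lt_trans i.2 j.2⟩ ω), X ω))) :
    1 - (4 * α ^ 2 * (t : ℝ) + 1) / Real.logb 2 (s : ℝ) ≤
      pr p (fun ω => g (fun i => Y i ω) ≠ X ω) := by
  classical
  set L : ℝ := Real.logb 2 (s : ℝ) with hL
  have hs1 : (1:ℝ) < (s:ℝ) := by exact_mod_cast lt_of_lt_of_le one_lt_two hs
  have hLpos : 0 < L := Real.logb_pos one_lt_two hs1
  set Yv : Ω → (Fin t → Bool) := fun ω i => Y i ω with hYv
  set E : Ω → Bool := fun ω => decide (g (Yv ω) ≠ X ω) with hE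
  set Pe : ℝ := pr p (fun ω => g (fun i => Y i ω) ≠ X ω) with hPe
  -- Step 1 (Fano): H(X | Yv) ≤ 1 + Pe * L
  have f1 : condEnt p X Yv = condEnt p (fun ω => (X ω, E ω)) Yv := by
    have h := condEnt_pair_det hp0 X Yv (fun x y => decide (g y ≠ x))
    refine h.symm.trans (condEnt_congr (fun ω => ?_) (fun ω => rfl))
    simp only [hE]
  have f2 : condEnt p (fun ω => (X ω, E ω)) Yv = condEnt p (fun ω => (E ω, X ω)) Yv := by
    refine Eq.trans (condEnt_congr ?_ ?_)
      (condEnt_comp_left hp0 (fun ω => (E ω, X ω)) Yv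
        (fun x : Bool × Fin s => (x.2, x.1)) swap_inj)
    · exact fun ω => rfl
    · exact fun ω => rfl
  have f3 : condEnt p (fun ω => (E ω, X ω)) Yv
      = condEnt p E Yv + condEnt p X (fun ω => (Yv ω, E ω)) :=
    condEnt_chain hp0 X E Yv
  have f4 : condEnt p E Yv ≤ 1 := by
    have h := condEnt_le_of_det hp0 E Yv (fun _ => True) (fun _ => true)
      (fun ω hc => absurd trivial hc)
    have h1 : pr p (fun _ : Ω => True) = 1 := pr_true hp1
    have h2 : Real.logb 2 (Fintype.card Bool : ℝ) = 1 := by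
      rw [show ((Fintype.card Bool : ℝ)) = 2 by simp]
      exact Real.logb_self_eq_one one_lt_two
    calc condEnt p E Yv
        ≤ pr p (fun _ : Ω => True) * Real.logb 2 (Fintype.card Bool : ℝ) := h
      _ = 1 := by rw [h1, h2, one_mul]
  have f5 : condEnt p X (fun ω => (Yv ω, E ω)) ≤ Pe * L := by
    have h := condEnt_le_of_det hp0 X (fun ω => (Yv ω, E ω))
      (fun v => v.2 = true) (fun v => g v.1) ?hdet
    case hdet =>
      intro ω hc
      show X ω = g (Yv ω)
      have hEf : E ω = false := by
        have hne : ¬ (E ω = true) := hc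
        simpa using hne
      rw [hE] at hEf
      have := of_decide_eq_false hEf
      exact (not_not.mp this).symm
    have hpr : pr p (fun ω => (Yv ω, E ω).2 = true) = Pe := by
      rw [hPe]
      refine pr_congr fun ω => ?_
      show E ω = true ↔ _
      simp only [hE, hYv, decide_eq_true_iff]
    have hcard : Real.logb 2 (Fintype.card (Fin s) : ℝ) = L := by
      rw [Fintype.card_fin]
    calc condEnt p X (fun ω => (Yv ω, E ω))
        ≤ pr p (fun ω => (Yv ω, E ω).2 = true) * Real.logb 2 (Fintype.card (Fin s) : ℝ) := h
      _ = Pe * L := by rw [hpr, hcard]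
  have fano : condEnt p X Yv ≤ 1 + Pe * L := by
    rw [f1, f2, f3]; linarith
  -- Step 2 (chain rule both ways)
  have c1 : condEnt p (fun ω => (X ω, Yv ω)) (fun _ : Ω => ())
      = condEnt p X (fun _ : Ω => ()) + condEnt p Yv (fun ω => ((), X ω)) :=
    condEnt_chain hp0 Yv X (fun _ => ())
  have c1' : condEnt p Yv (fun ω => ((), X ω)) = condEnt p Yv X := by
    refine Eq.trans (condEnt_congr (fun ω => rfl) ?_)
      (condEnt_comp_right hp0 Yv X (fun x : Fin s => ((), x)) unit_pair_inj)
    exact fun ω => rfl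
  have c2 : condEnt p (fun ω => (Yv ω, X ω)) (fun _ : Ω => ())
      = condEnt p Yv (fun _ : Ω => ()) + condEnt p X (fun ω => ((), Yv ω)) :=
    condEnt_chain hp0 X Yv (fun _ => ())
  have c2' : condEnt p X (fun ω => ((), Yv ω)) = condEnt p X Yv := by
    refine Eq.trans (condEnt_congr (fun ω => rfl) ?_)
      (condEnt_comp_right hp0 X Yv (fun x : Fin t → Bool => ((), x)) unit_pair_inj)
    exact fun ω => rfl
  have cswap : condEnt p (fun ω => (X ω, Yv ω)) (fun _ : Ω => ())
      = condEnt p (fun ω => (Yv ω, X ω)) (fun _ : Ω => ()) := by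
    refine Eq.trans (condEnt_congr ?_ (fun ω => rfl))
      (condEnt_comp_left hp0 (fun ω => (Yv ω, X ω)) (fun _ : Ω => ())
        (fun x : (Fin t → Bool) × Fin s => (x.2, x.1)) swap_inj)
    exact fun ω => rfl
  -- H(X) = log₂ s
  have entX : condEnt p X (fun _ : Ω => ()) = L := by
    rw [condEnt]
    have huniv : (Finset.univ : Finset Unit) = {()} := rfl
    simp only [huniv, Finset.sum_singleton]
    have h1 : ∀ x : Fin s, (pr p fun ω => X ω = x ∧ True) = 1/(s:ℝ) := by
      intro x
      rw [← hX x]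
      exact pr_congr fun ω => by simp
    have h2 : (pr p fun _ : Ω => True) = 1 := pr_true hp1
    simp only [h1, h2, div_one, one_div, Real.logb_inv]
    rw [Finset.sum_const, Finset.card_univ, Fintype.card_fin, nsmul_eq_mul]
    have hs0 : (s:ℝ) ≠ 0 := by positivity
    rw [hL]
    field_simp
  -- H(Yv) ≤ t
  have entYv : condEnt p Yv (fun _ : Ω => ()) ≤ (t : ℝ) := by
    have h := condEnt_le_of_det hp0 Yv (fun _ : Ω => ()) (fun _ => True)
      (fun _ => fun _ => false) (fun ω hc => absurd trivial hc)
    have h1 : pr p (fun _ : Ω => True) = 1 := pr_true hp1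
    have h2 : Real.logb 2 (Fintype.card (Fin t → Bool) : ℝ) = (t : ℝ) := by
      rw [show ((Fintype.card (Fin t → Bool) : ℝ)) = (2:ℝ) ^ t by
        rw [Fintype.card_fun, Fintype.card_fin, Fintype.card_bool]; push_cast; ring]
      rw [Real.logb_pow, Real.logb_self_eq_one one_lt_two, mul_one]
    calc condEnt p Yv (fun _ : Ω => ())
        ≤ pr p (fun _ : Ω => True) * Real.logb 2 (Fintype.card (Fin t → Bool) : ℝ) := h
      _ = (t : ℝ) := by rw [h1, h2, one_mul]
  -- Step 3: H(Yv | X) ≥ t(1 - 4α²)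
  have main : ∀ k (hk : k ≤ t),
      (k:ℝ) * (1 - 4*α^2) ≤
        condEnt p (fun ω (i : Fin k) => Y ⟨i.1, lt_of_lt_of_le i.2 hk⟩ ω) X := by
    intro k
    induction k with
    | zero => intro hk; simpa using condEnt_nonneg hp0 _ X
    | succ k ih =>
      intro hk
      have hk' : k < t := lt_of_lt_of_le (Nat.lt_succ_self k) hk
      have hkle : k ≤ t := le_of_lt hk'
      have hfun : ∀ ω, (fun i : Fin (k+1) => Y ⟨i.1, lt_of_lt_of_le i.2 hk⟩ ω)
          = (Fin.snoc (fun i : Fin k => Y ⟨i.1, lt_of_lt_of_le i.2 hkle⟩ ω)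
              (Y ⟨k, hk'⟩ ω) : Fin (k+1) → Bool) := by
        intro ω
        funext i
        refine Fin.lastCases ?_ ?_ i
        · simp [Fin.snoc_last]
        · intro j
          simp [Fin.snoc_castSucc]
      have h1 : condEnt p (fun ω (i : Fin (k+1)) => Y ⟨i.1, lt_of_lt_of_le i.2 hk⟩ ω) X
          = condEnt p (fun ω => ((fun i : Fin k => Y ⟨i.1, lt_of_lt_of_le i.2 hkle⟩ ω),
              Y ⟨k, hk'⟩ ω)) X := by
        refine Eq.trans (condEnt_congr ?_ (fun ω => rfl))
          (condEnt_comp_left hp0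
            (fun ω => ((fun i : Fin k => Y ⟨i.1, lt_of_lt_of_le i.2 hkle⟩ ω), Y ⟨k, hk'⟩ ω)) X
            (fun x : (Fin k → Bool) × Bool => (Fin.snoc x.1 x.2 : Fin (k+1) → Bool))
            snoc_pair_inj)
        exact fun ω => hfun ω
      have h2 : condEnt p (fun ω => ((fun i : Fin k => Y ⟨i.1, lt_of_lt_of_le i.2 hkle⟩ ω),
              Y ⟨k, hk'⟩ ω)) X
          = condEnt p (fun ω (i : Fin k) => Y ⟨i.1, lt_of_lt_of_le i.2 hkle⟩ ω) X
            + condEnt p (Y ⟨k, hk'⟩)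
              (fun ω => (X ω, fun i : Fin k => Y ⟨i.1, lt_of_lt_of_le i.2 hkle⟩ ω)) :=
        condEnt_chain hp0 (Y ⟨k, hk'⟩) _ X
      have h3 : condEnt p (Y ⟨k, hk'⟩)
            (fun ω => (X ω, fun i : Fin k => Y ⟨i.1, lt_of_lt_of_le i.2 hkle⟩ ω))
          = condEnt p (Y ⟨k, hk'⟩)
            (fun ω => ((fun i : Fin k => Y ⟨i.1, lt_of_lt_of_le i.2 hkle⟩ ω), X ω)) := by
        refine Eq.trans (condEnt_congr (fun ω => rfl) ?_)
          (condEnt_comp_right hp0 (Y ⟨k, hk'⟩)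
            (fun ω => ((fun i : Fin k => Y ⟨i.1, lt_of_lt_of_le i.2 hkle⟩ ω), X ω))
            (fun x : ((Fin k → Bool) × Fin s) => (x.2, x.1)) swap_inj)
        exact fun ω => rfl
      have h4 : 1 - 4*α^2 ≤ condEnt p (Y ⟨k, hk'⟩)
            (fun ω => ((fun i : Fin k => Y ⟨i.1, lt_of_lt_of_le i.2 hkle⟩ ω), X ω)) := by
        have h := hent ⟨k, hk'⟩
        refine le_of_le_of_eq h (condEnt_congr (fun ω => rfl) (fun ω => rfl))
      have h5 := ih hkle
      rw [h1, h2, h3]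
      push_cast
      linarith
  have hYX : (t:ℝ) * (1 - 4*α^2) ≤ condEnt p Yv X := by
    have h := main t le_rfl
    refine le_of_le_of_eq h (condEnt_congr (fun ω => ?_) (fun ω => rfl))
    funext i
    rfl
  -- Assemble
  have eq1 : L + condEnt p Yv X
      = condEnt p Yv (fun _ : Ω => ()) + condEnt p X Yv := by
    have h := c1.symm.trans (cswap.trans c2)
    rw [c1', c2', entX] at h
    linarith
  have key : L - (4*α^2*(t:ℝ) + 1) ≤ Pe * L := by nlinarith [fano, hYX, entYv, eq1]
  have hfinal : (L - (4*α^2*(t:ℝ) + 1)) / L ≤ Pe := by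
    rw [div_le_iff₀ hLpos]
    linarith
  calc 1 - (4 * α ^ 2 * (t : ℝ) + 1) / L = (L - (4*α^2*(t:ℝ) + 1)) / L := by
        rw [sub_div, div_self (ne_of_gt hLpos)]
    _ ≤ Pe := hfinal
end
end

section
/- Let r ≥ 1, let Π be a d×d real symmetric orthogonal projection matrix of rank r, and set ρ₀ = Π/r. Then for every real d×d matrix M and all real orthogonal matrices O, O' (satisfying OᵀO = O'ᵀO' = I): | ‖M − O'ρ₀O'ᵀ‖_tr − ‖M − Oρ₀Oᵀ‖_tr | ≤ (4/√r)·‖O' − O‖_F. In other words, the function O ↦ ‖M − Oρ₀Oᵀ‖_tr is Lipschitz on the orthogonal group with constant 4/√r with respect to the Frobenius norm. -/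
open scoped ComplexOrder Matrix BigOperators Kronecker
open MeasureTheory

noncomputable section

/-- Trace norm of a real square matrix: `Tr √(XᵀX)`. -/
def traceNormR {ι : Type*} [Fintype ι] [DecidableEq ι] (X : Matrix ι ι ℝ) : ℝ :=
  ((((Matrix.posSemidef_conjTranspose_mul_self X).1.eigenvectorUnitary : Matrix ι ι ℝ) *
    Matrix.diagonal ((RCLike.ofReal : ℝ → ℝ) ∘ Real.sqrt ∘ (Matrix.posSemidef_conjTranspose_mul_self X).1.eigenvalues) *
    (star (Matrix.posSemidef_conjTranspose_mul_self X).1.eigenvectorUnitary : Matrix ι ι ℝ))).trace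

/-- Frobenius norm of a real matrix. -/
def frobNormR {ι : Type*} [Fintype ι] [DecidableEq ι] (X : Matrix ι ι ℝ) : ℝ :=
  Real.sqrt (Xᵀ * X).trace

/-- Operator norm (largest singular value) of a real matrix. -/
def opNormR {ι : Type*} [Fintype ι] [DecidableEq ι] (X : Matrix ι ι ℝ) : ℝ :=
  ‖Matrix.toEuclideanCLM (𝕜 := ℝ) X‖

set_option linter.unusedSectionVars false
set_option maxHeartbeats 1000000

namespace TNAux
open Matrix
variable {n : Type*} [Fintype n] [DecidableEq n]

lemma trace_eq (A : Matrix n n ℝ) : A.trace = ∑ i, A i i := rfl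

lemma conjT_mul_diag (M N : Matrix n n ℝ) (j : n) :
    (Mᴴ * N) j j = ∑ i, M i j * N i j := by
  simp [Matrix.mul_apply, conjTranspose_apply]

lemma mulvec_dot_le {Q : Matrix n n ℝ} (hQ : (1 - Qᴴ * Q).PosSemidef) (v : n → ℝ) :
    (Q *ᵥ v) ⬝ᵥ (Q *ᵥ v) ≤ v ⬝ᵥ v := by
  have h := hQ.dotProduct_mulVec_nonneg v
  have key : v ⬝ᵥ ((Qᴴ * Q) *ᵥ v) = (Q *ᵥ v) ⬝ᵥ (Q *ᵥ v) := by
    rw [← Matrix.mulVec_mulVec, Matrix.dotProduct_mulVec v Qᴴ,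
      conjTranspose_eq_transpose_of_trivial, Matrix.vecMul_transpose]
  simp only [star_trivial, Matrix.sub_mulVec, dotProduct_sub, Matrix.one_mulVec] at h
  rw [key] at h
  linarith

/-- `g t = t ^ (-1/2)` for `t ≠ 0`, else `0`. -/
def gfun : ℝ → ℝ := fun t => if t = 0 then 0 else (Real.sqrt t)⁻¹

lemma gfun_mul {t : ℝ} (ht : 0 ≤ t) : gfun t * t = Real.sqrt t := by
  by_cases h : t = 0
  · simp [gfun, h]
  · have hs : Real.sqrt t ≠ 0 := Real.sqrt_ne_zero'.2 (lt_of_le_of_ne ht (Ne.symm h))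
    rw [gfun, if_neg h]
    rw [← Real.mul_self_sqrt ht]
    field_simp
    rw [Real.sqrt_sq (Real.sqrt_nonneg t)]

lemma gfun_mul_gfun {t : ℝ} (ht : 0 ≤ t) :
    gfun t * t * gfun t = if t = 0 then 0 else 1 := by
  by_cases h : t = 0
  · simp [gfun, h]
  · have hs : Real.sqrt t ≠ 0 := Real.sqrt_ne_zero'.2 (lt_of_le_of_ne ht (Ne.symm h))
    rw [gfun, if_neg h, if_neg h, ← Real.mul_self_sqrt ht]
    field_simp
    rw [Real.sqrt_sq (Real.sqrt_nonneg t)]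

lemma herm_diag {A : Matrix n n ℝ} (hH : A.IsHermitian) :
    star (hH.eigenvectorUnitary : Matrix n n ℝ) * A * (hH.eigenvectorUnitary : Matrix n n ℝ)
      = diagonal hH.eigenvalues := by
  have h1 := (Matrix.mem_unitaryGroup_iff').mp hH.eigenvectorUnitary.2
  have h2 := (Matrix.mem_unitaryGroup_iff).mp hH.eigenvectorUnitary.2
  have hs : A = (hH.eigenvectorUnitary : Matrix n n ℝ) * diagonal (RCLike.ofReal ∘ hH.eigenvalues)
      * star (hH.eigenvectorUnitary : Matrix n n ℝ) := by
    have := hH.spectral_theorem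
    rwa [Unitary.conjStarAlgAut_apply] at this
  calc star (hH.eigenvectorUnitary : Matrix n n ℝ) * A * (hH.eigenvectorUnitary : Matrix n n ℝ)
      = star (hH.eigenvectorUnitary : Matrix n n ℝ) * ((hH.eigenvectorUnitary : Matrix n n ℝ)
        * diagonal (RCLike.ofReal ∘ hH.eigenvalues) * star (hH.eigenvectorUnitary : Matrix n n ℝ))
        * (hH.eigenvectorUnitary : Matrix n n ℝ) := by rw [← hs]
    _ = diagonal hH.eigenvalues := by
      simp only [← Matrix.mul_assoc, h1, Matrix.one_mul]
      rw [Matrix.mul_assoc, h1, Matrix.mul_one]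
      ext i j; simp [diagonal]

def hA (X : Matrix n n ℝ) : (Xᴴ * X).PosSemidef := Matrix.posSemidef_conjTranspose_mul_self X
def V (X : Matrix n n ℝ) : Matrix n n ℝ := ((hA X).1.eigenvectorUnitary : Matrix n n ℝ)
def μ (X : Matrix n n ℝ) : n → ℝ := (hA X).1.eigenvalues

section spectral
variable (X : Matrix n n ℝ)

lemma V_unitary : V X * (V X)ᴴ = 1 ∧ (V X)ᴴ * V X = 1 := by
  rw [← Matrix.star_eq_conjTranspose]
  constructor
  · exact (Matrix.mem_unitaryGroup_iff).mp ((hA X).1.eigenvectorUnitary).2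
  · exact (Matrix.mem_unitaryGroup_iff').mp ((hA X).1.eigenvectorUnitary).2

lemma VAV : (V X)ᴴ * (Xᴴ * X) * V X = diagonal (μ X) := by
  have := herm_diag (hA X).1
  simpa [V, μ, Matrix.star_eq_conjTranspose] using this

lemma μ_nonneg (i : n) : 0 ≤ μ X i := (hA X).eigenvalues_nonneg i

lemma traceNormR_eq_sum : traceNormR X = ∑ i, Real.sqrt (μ X i) := by
  rw [traceNormR, Matrix.trace_mul_cycle]
  have h := (V_unitary X).2
  unfold V at h
  rw [← Matrix.star_eq_conjTranspose] at h
  rw [h, one_mul, Matrix.trace_diagonal]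
  simp [μ, hA]

lemma traceNormR_nonneg : 0 ≤ traceNormR X := by
  rw [traceNormR_eq_sum]
  exact Finset.sum_nonneg fun i _ => Real.sqrt_nonneg _

lemma WHW : (X * V X)ᴴ * (X * V X) = diagonal (μ X) := by
  rw [← VAV X, conjTranspose_mul]
  simp only [Matrix.mul_assoc]

lemma WHW' (Z : Matrix n n ℝ) : (X * V X)ᴴ * (X * V X * Z) = diagonal (μ X) * Z := by
  rw [← Matrix.mul_assoc, WHW]

lemma WHW2 (Z : Matrix n n ℝ) : (V X)ᴴ * (Xᴴ * (X * (V X * Z))) = diagonal (μ X) * Z := by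
  calc (V X)ᴴ * (Xᴴ * (X * (V X * Z))) = ((X * V X)ᴴ * (X * V X)) * Z := by
        rw [conjTranspose_mul]; simp only [Matrix.mul_assoc]
    _ = diagonal (μ X) * Z := by rw [WHW]

lemma X_eq : X = (X * V X) * (V X)ᴴ := by
  rw [Matrix.mul_assoc, (V_unitary X).1, Matrix.mul_one]

lemma colV_unit (j : n) : (∑ i, V X i j * V X i j) = 1 := by
  have h := (V_unitary X).2
  have h2 := conjT_mul_diag (V X) (V X) j
  rw [h] at h2
  simpa using h2.symm

lemma colW_sq (j : n) : (∑ i, (X * V X) i j * (X * V X) i j) = μ X j := by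
  have h2 := conjT_mul_diag (X * V X) (X * V X) j
  rw [WHW] at h2
  simpa using h2.symm

/-- D1: duality upper bound -/
lemma trace_le_traceNormR (Q : Matrix n n ℝ) (hQ : (1 - Qᴴ * Q).PosSemidef) :
    Matrix.trace (Qᴴ * X) ≤ traceNormR X := by
  rw [traceNormR_eq_sum]
  have ht : Matrix.trace (Qᴴ * X) = Matrix.trace ((Q * V X)ᴴ * (X * V X)) := by
    conv_lhs => rw [X_eq X]
    rw [← Matrix.mul_assoc, Matrix.trace_mul_cycle, ← Matrix.mul_assoc, ← conjTranspose_mul,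
      Matrix.mul_assoc]
  have h1 : Matrix.trace ((Q * V X)ᴴ * (X * V X)) = ∑ j, ∑ i, (Q * V X) i j * (X * V X) i j := by
    rw [trace_eq]
    exact Finset.sum_congr rfl fun j _ => conjT_mul_diag _ _ j
  rw [ht, h1]
  refine Finset.sum_le_sum fun j _ => ?_
  have hcs := Finset.sum_mul_sq_le_sq_mul_sq Finset.univ
    (fun i => (Q * V X) i j) (fun i => (X * V X) i j)
  have hv : ∀ i, (Q * V X) i j = (Q *ᵥ (fun k => V X k j)) i := by
    intro i; simp [Matrix.mul_apply, Matrix.mulVec, dotProduct]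
  have hQcol : (∑ i, ((Q * V X) i j) ^ 2) ≤ 1 := by
    have hd := mulvec_dot_le hQ (fun k => V X k j)
    have hvv : (fun k => V X k j) ⬝ᵥ (fun k => V X k j) = 1 := by
      simpa [dotProduct] using colV_unit X j
    calc (∑ i, ((Q * V X) i j) ^ 2)
        = (Q *ᵥ (fun k => V X k j)) ⬝ᵥ (Q *ᵥ (fun k => V X k j)) := by
          rw [dotProduct]
          exact Finset.sum_congr rfl fun i _ => by rw [sq, hv i]
      _ ≤ 1 := by rw [hvv] at hd; exact hd
  have hWcol : (∑ i, ((X * V X) i j) ^ 2) = μ X j := by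
    have := colW_sq X j
    rw [← this]
    exact Finset.sum_congr rfl fun i _ => sq ((X * V X) i j)
  have habs : (∑ i, (Q * V X) i j * (X * V X) i j) ≤
      Real.sqrt ((∑ i, ((Q * V X) i j) ^ 2) * (∑ i, ((X * V X) i j) ^ 2)) := by
    refine le_trans (le_abs_self _) ?_
    rw [← Real.sqrt_sq_eq_abs]
    exact Real.sqrt_le_sqrt hcs
  refine habs.trans ?_
  rw [hWcol]
  calc Real.sqrt ((∑ i, ((Q * V X) i j) ^ 2) * μ X j)
      ≤ Real.sqrt (1 * μ X j) :=
        Real.sqrt_le_sqrt (mul_le_mul_of_nonneg_right hQcol (μ_nonneg X j))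
    _ = Real.sqrt (μ X j) := by rw [one_mul]

/-- D2: duality is attained -/
lemma exists_dual : ∃ Q : Matrix n n ℝ, (1 - Qᴴ * Q).PosSemidef ∧
    Matrix.trace (Qᴴ * X) = traceNormR X := by
  classical
  refine ⟨(X * V X) * diagonal (gfun ∘ μ X) * (V X)ᴴ, ?_, ?_⟩
  · have hQQ : ((X * V X) * diagonal (gfun ∘ μ X) * (V X)ᴴ)ᴴ *
        ((X * V X) * diagonal (gfun ∘ μ X) * (V X)ᴴ)
        = V X * ((diagonal fun j => if μ X j = 0 then 0 else 1) * (V X)ᴴ) := by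
      simp only [conjTranspose_mul, conjTranspose_conjTranspose, diagonal_conjTranspose,
        star_trivial, Matrix.mul_assoc]
      rw [WHW2]
      rw [← Matrix.mul_assoc (diagonal (gfun ∘ μ X)) (diagonal (μ X)), diagonal_mul_diagonal,
        ← Matrix.mul_assoc (diagonal _) (diagonal (gfun ∘ μ X)), diagonal_mul_diagonal]
      rw [show (fun i => (gfun ∘ μ X) i * μ X i * (gfun ∘ μ X) i)
          = (fun j => if μ X j = 0 then (0:ℝ) else 1) from
        funext fun j => gfun_mul_gfun (μ_nonneg X j)]
    rw [hQQ]
    have hsub : (1 : Matrix n n ℝ) -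
        V X * ((diagonal fun j => if μ X j = 0 then 0 else 1) * (V X)ᴴ)
        = V X * ((1 : Matrix n n ℝ) - diagonal fun j => if μ X j = 0 then 0 else 1) * (V X)ᴴ := by
      rw [Matrix.mul_sub, Matrix.mul_one, Matrix.sub_mul, (V_unitary X).1, Matrix.mul_assoc]
    rw [hsub]
    refine Matrix.PosSemidef.mul_mul_conjTranspose_same ?_ (V X)
    have hd : (1 : Matrix n n ℝ) - (diagonal fun j => if μ X j = 0 then 0 else 1)
        = diagonal (fun j => 1 - (if μ X j = 0 then 0 else 1)) := by
      rw [← diagonal_one, diagonal_sub]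
    rw [hd]
    refine Matrix.PosSemidef.diagonal ?_
    intro j
    by_cases h : μ X j = 0 <;> simp [h]
  · have hQ1 : ((X * V X) * diagonal (gfun ∘ μ X) * (V X)ᴴ)ᴴ
        = V X * (diagonal (gfun ∘ μ X) * (X * V X)ᴴ) := by
      simp only [conjTranspose_mul, conjTranspose_conjTranspose, diagonal_conjTranspose,
        star_trivial, Matrix.mul_assoc]
    rw [hQ1, Matrix.trace_mul_comm, ← Matrix.mul_assoc X (V X), Matrix.trace_mul_comm,
      Matrix.mul_assoc, WHW, diagonal_mul_diagonal, Matrix.trace_diagonal, traceNormR_eq_sum]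
    refine Finset.sum_congr rfl fun j _ => ?_
    simp only [Pi.mul_apply, Function.comp_apply]
    exact gfun_mul (μ_nonneg X j)

end spectral
lemma sqrt_trace_congr {A B : Matrix n n ℝ} (h : A = B) (hA' : A.IsHermitian)
    (hB' : B.IsHermitian) :
    (((hA'.eigenvectorUnitary : Matrix n n ℝ) *
      Matrix.diagonal ((RCLike.ofReal : ℝ → ℝ) ∘ Real.sqrt ∘ hA'.eigenvalues) *
      (star hA'.eigenvectorUnitary : Matrix n n ℝ))).trace =
    (((hB'.eigenvectorUnitary : Matrix n n ℝ) *
      Matrix.diagonal ((RCLike.ofReal : ℝ → ℝ) ∘ Real.sqrt ∘ hB'.eigenvalues) *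
      (star hB'.eigenvectorUnitary : Matrix n n ℝ))).trace := by subst h; rfl

lemma traceNormR_neg (X : Matrix n n ℝ) : traceNormR (-X) = traceNormR X :=
  sqrt_trace_congr (by simp) _ _

lemma traceNormR_add_le (A B : Matrix n n ℝ) :
    traceNormR (A + B) ≤ traceNormR A + traceNormR B := by
  obtain ⟨Q, hQ, hQe⟩ := exists_dual (A + B)
  rw [← hQe, Matrix.mul_add, Matrix.trace_add]
  exact add_le_add (trace_le_traceNormR A Q hQ) (trace_le_traceNormR B Q hQ)

lemma frob_sq (A : Matrix n n ℝ) : (Aᵀ * A).trace = ∑ j, ∑ i, A i j * A i j := by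
  rw [← conjTranspose_eq_transpose_of_trivial, trace_eq]
  exact Finset.sum_congr rfl fun j _ => conjT_mul_diag _ _ j

lemma frob_sq_nonneg (A : Matrix n n ℝ) : 0 ≤ (Aᵀ * A).trace := by
  rw [frob_sq]
  exact Finset.sum_nonneg fun j _ => Finset.sum_nonneg fun i _ => mul_self_nonneg _

lemma frobNormR_nonneg (A : Matrix n n ℝ) : 0 ≤ frobNormR A := Real.sqrt_nonneg _

lemma frobNormR_transpose (A : Matrix n n ℝ) : frobNormR Aᵀ = frobNormR A := by
  rw [frobNormR, frobNormR, transpose_transpose, Matrix.trace_mul_comm]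

/-- trace norm of a product is at most the product of Frobenius norms -/
lemma traceNormR_mul_le (A B : Matrix n n ℝ) :
    traceNormR (A * B) ≤ frobNormR A * frobNormR B := by
  obtain ⟨Q, hQ, hQe⟩ := exists_dual (A * B)
  rw [← hQe]
  have htr : Matrix.trace (Qᴴ * (A * B)) = Matrix.trace (Aᴴ * (Q * Bᵀ)) := by
    rw [conjTranspose_eq_transpose_of_trivial, conjTranspose_eq_transpose_of_trivial,
      ← Matrix.trace_transpose (Qᵀ * (A * B)), Matrix.transpose_mul, Matrix.transpose_transpose,
      Matrix.transpose_mul, ← Matrix.mul_assoc, Matrix.trace_mul_cycle, Matrix.trace_mul_cycle,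
      Matrix.mul_assoc]
  rw [htr]
  have h1 : Matrix.trace (Aᴴ * (Q * Bᵀ)) = ∑ j, ∑ i, A i j * (Q * Bᵀ) i j := by
    rw [trace_eq]
    exact Finset.sum_congr rfl fun j _ => conjT_mul_diag _ _ j
  rw [h1]
  -- Cauchy-Schwarz over pairs
  have hcs : (∑ j, ∑ i, A i j * (Q * Bᵀ) i j) ≤
      Real.sqrt (∑ j, ∑ i, A i j * A i j) *
      Real.sqrt (∑ j, ∑ i, (Q * Bᵀ) i j * (Q * Bᵀ) i j) := by
    have e1 : (∑ j, ∑ i, A i j * (Q * Bᵀ) i j)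
        = ∑ p : n × n, A p.2 p.1 * (Q * Bᵀ) p.2 p.1 := by
      rw [Fintype.sum_prod_type]
    have e2 : (∑ j, ∑ i, A i j * A i j) = ∑ p : n × n, A p.2 p.1 * A p.2 p.1 := by
      rw [Fintype.sum_prod_type]
    have e3 : (∑ j, ∑ i, (Q * Bᵀ) i j * (Q * Bᵀ) i j)
        = ∑ p : n × n, (Q * Bᵀ) p.2 p.1 * (Q * Bᵀ) p.2 p.1 := by
      rw [Fintype.sum_prod_type]
    rw [e1, e2, e3]
    have hc := Finset.sum_mul_sq_le_sq_mul_sq Finset.univ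
      (fun p : n × n => A p.2 p.1) (fun p : n × n => (Q * Bᵀ) p.2 p.1)
    have habs : (∑ p : n × n, A p.2 p.1 * (Q * Bᵀ) p.2 p.1) ≤
        Real.sqrt ((∑ p : n × n, (A p.2 p.1) ^ 2) * (∑ p : n × n, ((Q * Bᵀ) p.2 p.1) ^ 2)) := by
      refine le_trans (le_abs_self _) ?_
      rw [← Real.sqrt_sq_eq_abs]
      exact Real.sqrt_le_sqrt hc
    refine habs.trans ?_
    rw [Real.sqrt_mul (Finset.sum_nonneg fun p _ => sq_nonneg _)]
    simp only [sq]
    exact le_refl _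
  refine hcs.trans ?_
  have hA : Real.sqrt (∑ j, ∑ i, A i j * A i j) = frobNormR A := by
    rw [frobNormR, frob_sq]
  have hQB : Real.sqrt (∑ j, ∑ i, (Q * Bᵀ) i j * (Q * Bᵀ) i j) ≤ frobNormR B := by
    rw [frobNormR]
    apply Real.sqrt_le_sqrt
    have hcol : ∀ j, (∑ i, (Q * Bᵀ) i j * (Q * Bᵀ) i j) ≤ ∑ i, B j i * B j i := by
      intro j
      have hv : ∀ i, (Q * Bᵀ) i j = (Q *ᵥ (fun k => B j k)) i := by
        intro i; simp [Matrix.mul_apply, Matrix.mulVec, dotProduct, Matrix.transpose_apply]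
      have hd := mulvec_dot_le hQ (fun k => B j k)
      calc (∑ i, (Q * Bᵀ) i j * (Q * Bᵀ) i j)
          = (Q *ᵥ (fun k => B j k)) ⬝ᵥ (Q *ᵥ (fun k => B j k)) := by
            rw [dotProduct]
            exact Finset.sum_congr rfl fun i _ => by rw [hv i]
        _ ≤ (fun k => B j k) ⬝ᵥ (fun k => B j k) := hd
        _ = ∑ i, B j i * B j i := rfl
    calc (∑ j, ∑ i, (Q * Bᵀ) i j * (Q * Bᵀ) i j)
        ≤ ∑ j, ∑ i, B j i * B j i := Finset.sum_le_sum fun j _ => hcol j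
      _ = (Bᵀ * B).trace := by
          rw [frob_sq, Finset.sum_comm]
  rw [hA]
  exact mul_le_mul_of_nonneg_left hQB (Real.sqrt_nonneg _)

/-- trace of a real symmetric idempotent = its rank -/
lemma trace_proj (P : Matrix n n ℝ) (hsym : Pᵀ = P) (hproj : P * P = P) :
    P.trace = (P.rank : ℝ) := by
  have hH : P.IsHermitian := by
    rw [Matrix.IsHermitian, conjTranspose_eq_transpose_of_trivial, hsym]
  set V := (hH.eigenvectorUnitary : Matrix n n ℝ) with hV
  have hVV : Vᴴ * V = 1 := by
    rw [← Matrix.star_eq_conjTranspose]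
    exact (Matrix.mem_unitaryGroup_iff').mp hH.eigenvectorUnitary.2
  have hVV' : V * Vᴴ = 1 := by
    rw [← Matrix.star_eq_conjTranspose]
    exact (Matrix.mem_unitaryGroup_iff).mp hH.eigenvectorUnitary.2
  have hdiag : Vᴴ * P * V = diagonal hH.eigenvalues := by
    have := herm_diag hH
    simpa [Matrix.star_eq_conjTranspose] using this
  -- eigenvalues are idempotent
  have hmu : ∀ i, hH.eigenvalues i = 0 ∨ hH.eigenvalues i = 1 := by
    intro i
    have hsq : diagonal hH.eigenvalues * diagonal hH.eigenvalues = diagonal hH.eigenvalues := by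
      rw [← hdiag]
      calc (Vᴴ * P * V) * (Vᴴ * P * V) = Vᴴ * (P * (V * Vᴴ) * P) * V := by
            simp only [Matrix.mul_assoc]
        _ = Vᴴ * P * V := by rw [hVV', Matrix.mul_one, hproj, Matrix.mul_assoc]
    rw [diagonal_mul_diagonal] at hsq
    have := congrArg (fun M => M i i) hsq
    simp only [diagonal_apply_eq, Pi.mul_apply] at this
    have hfact : hH.eigenvalues i * (hH.eigenvalues i - 1) = 0 := by nlinarith [this]
    rcases mul_eq_zero.mp hfact with h | h
    · left; exact h
    · right; linarith
  have htr : P.trace = ∑ i, hH.eigenvalues i := by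
    conv_lhs => rw [hH.spectral_theorem, Unitary.conjStarAlgAut_apply]
    rw [Matrix.trace_mul_cycle, ← Matrix.star_eq_conjTranspose] at *
    rw [show (star (hH.eigenvectorUnitary : Matrix n n ℝ) *
      (hH.eigenvectorUnitary : Matrix n n ℝ)) = 1 from hVV, one_mul, Matrix.trace_diagonal]
    simp
  rw [htr, hH.rank_eq_card_non_zero_eigs]
  rw [Fintype.card_subtype]
  rw [show (∑ i, hH.eigenvalues i) = ∑ i, if hH.eigenvalues i ≠ 0 then (1:ℝ) else 0 from
    Finset.sum_congr rfl fun i _ => by rcases hmu i with h | h <;> simp [h]]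
  rw [Finset.sum_boole]

lemma traceNormR_sub_sub (M A B : Matrix n n ℝ) :
    |traceNormR (M - B) - traceNormR (M - A)| ≤ traceNormR (B - A) := by
  have hBA : traceNormR (A - B) = traceNormR (B - A) := by
    rw [← traceNormR_neg (B - A), neg_sub]
  have h1 : traceNormR (M - B) ≤ traceNormR (M - A) + traceNormR (B - A) := by
    have : M - B = (M - A) + (A - B) := by abel
    rw [this, ← hBA]
    exact le_trans (traceNormR_add_le _ _) (by rw [hBA])
  have h2 : traceNormR (M - A) ≤ traceNormR (M - B) + traceNormR (B - A) := by
    have : M - A = (M - B) + (B - A) := by abel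
    rw [this]
    exact traceNormR_add_le _ _
  rw [abs_sub_le_iff]
  constructor <;> linarith

theorem main
    {d r : ℕ} (hr : 1 ≤ r)
    (Pj : Matrix (Fin d) (Fin d) ℝ)
    (hsym : Pjᵀ = Pj) (hproj : Pj * Pj = Pj) (hrank : Pj.rank = r)
    (M O O' : Matrix (Fin d) (Fin d) ℝ)
    (hO : Oᵀ * O = 1) (hO' : O'ᵀ * O' = 1) :
    |traceNormR (M - O' * ((r : ℝ)⁻¹ • Pj) * O'ᵀ) -
        traceNormR (M - O * ((r : ℝ)⁻¹ • Pj) * Oᵀ)| ≤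
      (4 / Real.sqrt r) * frobNormR (O' - O) := by
  have hrpos : (0:ℝ) < r := by exact_mod_cast Nat.lt_of_lt_of_le Nat.zero_lt_one hr
  have hsq : (0:ℝ) < Real.sqrt r := Real.sqrt_pos.2 hrpos
  set ρ : Matrix (Fin d) (Fin d) ℝ := (r : ℝ)⁻¹ • Pj with hρ
  have htrPj : Pj.trace = (r : ℝ) := by rw [trace_proj Pj hsym hproj, hrank]
  have hρρ : ρᵀ * ρ = ((r:ℝ)⁻¹ * (r:ℝ)⁻¹) • Pj := by
    rw [hρ, transpose_smul, hsym, smul_mul_assoc, Matrix.mul_smul, hproj, smul_smul]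
  have htrρρ : (ρᵀ * ρ).trace = (r:ℝ)⁻¹ := by
    rw [hρρ, trace_smul, smul_eq_mul, htrPj]
    field_simp
  -- Frobenius norm of ρ * Qᵀ and Q * ρ for orthogonal Q
  have hfrob1 : ∀ Q : Matrix (Fin d) (Fin d) ℝ, Qᵀ * Q = 1 →
      frobNormR (ρ * Qᵀ) = Real.sqrt (r:ℝ)⁻¹ := by
    intro Q hQ
    rw [frobNormR]
    congr 1
    calc ((ρ * Qᵀ)ᵀ * (ρ * Qᵀ)).trace
        = (Q * (ρᵀ * ρ) * Qᵀ).trace := by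
          rw [transpose_mul, transpose_transpose]
          simp only [Matrix.mul_assoc]
      _ = ((ρᵀ * ρ) * (Qᵀ * Q)).trace := by
          rw [Matrix.trace_mul_cycle, Matrix.trace_mul_comm]
      _ = (r:ℝ)⁻¹ := by rw [hQ, Matrix.mul_one, htrρρ]
  have hfrob2 : frobNormR (O * ρ) = Real.sqrt (r:ℝ)⁻¹ := by
    rw [frobNormR]
    congr 1
    calc ((O * ρ)ᵀ * (O * ρ)).trace
        = (ρᵀ * (Oᵀ * O) * ρ).trace := by
          rw [transpose_mul]
          simp only [Matrix.mul_assoc]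
      _ = (r:ℝ)⁻¹ := by rw [hO, Matrix.mul_one, htrρρ]
  -- decompose the difference
  have hdecomp : O' * ρ * O'ᵀ - O * ρ * Oᵀ
      = (O' - O) * (ρ * O'ᵀ) + (O * ρ) * (O' - O)ᵀ := by
    rw [transpose_sub]
    simp only [Matrix.sub_mul, Matrix.mul_sub, Matrix.mul_assoc]
    abel
  have hkey := traceNormR_sub_sub M (O * ρ * Oᵀ) (O' * ρ * O'ᵀ)
  refine hkey.trans ?_
  rw [hdecomp]
  have hb1 := traceNormR_add_le ((O' - O) * (ρ * O'ᵀ)) ((O * ρ) * (O' - O)ᵀ)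
  refine hb1.trans ?_
  have hb2 := traceNormR_mul_le (O' - O) (ρ * O'ᵀ)
  have hb3 := traceNormR_mul_le (O * ρ) (O' - O)ᵀ
  rw [hfrob1 O' hO'] at hb2
  rw [hfrob2, frobNormR_transpose] at hb3
  have hsr : Real.sqrt (r:ℝ)⁻¹ = (Real.sqrt r)⁻¹ := Real.sqrt_inv r
  have hfn : 0 ≤ frobNormR (O' - O) := frobNormR_nonneg _
  rw [hsr] at hb2 hb3
  have : frobNormR (O' - O) * (Real.sqrt r)⁻¹ + (Real.sqrt r)⁻¹ * frobNormR (O' - O)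
      ≤ 4 / Real.sqrt r * frobNormR (O' - O) := by
    rw [div_eq_mul_inv]
    have h4 : (2:ℝ) * (Real.sqrt r)⁻¹ ≤ 4 * (Real.sqrt r)⁻¹ := by
      have := inv_nonneg.mpr hsq.le
      nlinarith
    nlinarith [inv_nonneg.mpr hsq.le]
  linarith

end TNAux

/-- **Lipschitz bound for the trace-norm distance to a rotated low-rank
projection** (from the proof of Lemma 5 of "Quantum Tomography via Compressed
Sensing").

For `ρ₀ = Π/r` a normalized rank-`r` projection and any matrix `M`, the map
`O ↦ ‖M - O ρ₀ Oᵀ‖_tr` is `4/√r`-Lipschitz on the orthogonal group in the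
Frobenius norm. -/
theorem trace_distance_rotation_lipschitz
    {d r : ℕ} (hr : 1 ≤ r)
    (Pj : Matrix (Fin d) (Fin d) ℝ)
    (hsym : Pjᵀ = Pj) (hproj : Pj * Pj = Pj) (hrank : Pj.rank = r)
    (M O O' : Matrix (Fin d) (Fin d) ℝ)
    (hO : Oᵀ * O = 1) (hO' : O'ᵀ * O' = 1) :
    |traceNormR (M - O' * ((r : ℝ)⁻¹ • Pj) * O'ᵀ) -
        traceNormR (M - O * ((r : ℝ)⁻¹ • Pj) * Oᵀ)| ≤
      (4 / Real.sqrt r) * frobNormR (O' - O) :=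
  TNAux.main hr Pj hsym hproj hrank M O O' hO hO'
end
end

section
/- Let r ≥ 1, let φ₁, …, φ_r be orthonormal vectors in ℂ^d, let λ₁, …, λ_r ≥ 0 with Σ_j λ_j ≤ 1, and let ρ be a d×d positive semidefinite Hermitian matrix. Define G = Σ_{j,k=1}^r √(λ_j λ_k)·⟨φ_j, ρ φ_k⟩·|φ_j⟩⟨φ_k| (equivalently G = √ρ̂·ρ·√ρ̂ for ρ̂ = Σ_j λ_j |φ_j⟩⟨φ_j|). Let ε₀ > 0 and let (ε_{jk})_{j,k=1}^r be complex numbers with ε_{kj} = conj(ε_{jk}) and |ε_{jk}| ≤ ε₀ for all j, k, and define the Hermitian matrix E = Σ_{j,k=1}^r √(λ_j λ_k)·ε_{jk}·|φ_j⟩⟨φ_k|. Then | Tr√G − Tr√([G + E]₊) | ≤ r^{3/4}·√(2ε₀), where [·]₊ denotes the positive part of a Hermitian matrix. -/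
open scoped ComplexOrder Matrix BigOperators Kronecker
open MeasureTheory

noncomputable section

/-- Trace norm of a complex square matrix: `Tr √(XᴴX)`. -/
def traceNorm {ι : Type*} [Fintype ι] [DecidableEq ι] (X : Matrix ι ι ℂ) : ℝ :=
  ((((Matrix.posSemidef_conjTranspose_mul_self X).1.eigenvectorUnitary : Matrix ι ι ℂ) *
    Matrix.diagonal (fun i => ((Real.sqrt
      ((Matrix.posSemidef_conjTranspose_mul_self X).1.eigenvalues i) : ℝ) : ℂ)) *
    (star (Matrix.posSemidef_conjTranspose_mul_self X).1.eigenvectorUnitary :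
      Matrix ι ι ℂ)).trace).re

/-- Frobenius norm `√(Tr(XᴴX))`. -/
def frobNorm {ι : Type*} [Fintype ι] [DecidableEq ι] (X : Matrix ι ι ℂ) : ℝ :=
  Real.sqrt ((Xᴴ * X).trace).re

/-- Operator norm (largest singular value), realized as the norm of the induced
continuous linear map on Euclidean space. -/
def opNorm {ι : Type*} [Fintype ι] [DecidableEq ι] (X : Matrix ι ι ℂ) : ℝ :=
  ‖Matrix.toEuclideanCLM (𝕜 := ℂ) X‖

/-- Euclidean norm on `ℝ^m`. -/
def l2norm {m : ℕ} (z : Fin m → ℝ) : ℝ :=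
  Real.sqrt (∑ i, (z i) ^ 2)

open Classical in
/-- The positive part `[H]₊` of a Hermitian matrix (junk value `0` otherwise). -/
def matPosPart {ι : Type*} [Fintype ι] [DecidableEq ι] (H : Matrix ι ι ℂ) :
    Matrix ι ι ℂ :=
  if h : H.IsHermitian then
    (h.eigenvectorUnitary : Matrix ι ι ℂ) *
      Matrix.diagonal (fun i => ((max (h.eigenvalues i) 0 : ℝ) : ℂ)) *
      (star h.eigenvectorUnitary : Matrix ι ι ℂ)
  else 0

open Classical in
/-- The positive semidefinite square root of a positive semidefinite matrix
(junk value `0` otherwise). -/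
def psdSqrt {ι : Type*} [Fintype ι] [DecidableEq ι] (A : Matrix ι ι ℂ) :
    Matrix ι ι ℂ :=
  if h : A.PosSemidef then
    (h.1.eigenvectorUnitary : Matrix ι ι ℂ) *
      Matrix.diagonal (fun i => ((Real.sqrt (h.1.eigenvalues i) : ℝ) : ℂ)) *
      (star h.1.eigenvectorUnitary : Matrix ι ι ℂ)
  else 0

namespace Pf
variable {n : Type*} [Fintype n] [DecidableEq n]
set_option linter.unusedSectionVars false

def hFun (H : Matrix n n ℂ) (hH : H.IsHermitian) (f : ℝ → ℝ) : Matrix n n ℂ :=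
  (hH.eigenvectorUnitary : Matrix n n ℂ) *
    Matrix.diagonal (fun i => ((f (hH.eigenvalues i) : ℝ) : ℂ)) *
    (star hH.eigenvectorUnitary : Matrix n n ℂ)
lemma star_mul_selfU (H : Matrix n n ℂ) (hH : H.IsHermitian) :
    (star hH.eigenvectorUnitary : Matrix n n ℂ) * (hH.eigenvectorUnitary : Matrix n n ℂ) = 1 :=
  (Matrix.mem_unitaryGroup_iff').mp (hH.eigenvectorUnitary).2
lemma hFun_id (H : Matrix n n ℂ) (hH : H.IsHermitian) : hFun H hH (fun x => x) = H := by
  rw [hFun]; exact (hH.spectral_theorem).symm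
lemma hFun_mul (H : Matrix n n ℂ) (hH : H.IsHermitian) (f g : ℝ → ℝ) :
    hFun H hH f * hFun H hH g = hFun H hH (fun x => f x * g x) := by
  simp only [hFun, Matrix.mul_assoc]
  rw [← Matrix.mul_assoc (star _) _ _, star_mul_selfU, Matrix.one_mul,
    ← Matrix.mul_assoc (Matrix.diagonal _), Matrix.diagonal_mul_diagonal]
  push_cast
  rfl
lemma hFun_add (H : Matrix n n ℂ) (hH : H.IsHermitian) (f g : ℝ → ℝ) :
    hFun H hH f + hFun H hH g = hFun H hH (fun x => f x + g x) := by
  simp only [hFun, ← Matrix.add_mul, ← Matrix.mul_add, Matrix.diagonal_add]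
  push_cast
  rfl
lemma hFun_herm (H : Matrix n n ℂ) (hH : H.IsHermitian) (f : ℝ → ℝ) :
    (hFun H hH f).IsHermitian := by
  unfold hFun
  unfold Matrix.IsHermitian
  simp only [Matrix.conjTranspose_mul, Matrix.star_eq_conjTranspose,
    Matrix.conjTranspose_conjTranspose, Matrix.diagonal_conjTranspose, Matrix.mul_assoc]
  congr 1
  ext i j
  simp [Pi.star_def, Complex.conj_ofReal]
lemma hFun_psd (H : Matrix n n ℂ) (hH : H.IsHermitian) (f : ℝ → ℝ)
    (hf : ∀ x, 0 ≤ f x) : (hFun H hH f).PosSemidef := by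
  unfold hFun
  rw [Matrix.star_eq_conjTranspose]
  exact (Matrix.PosSemidef.diagonal (fun i => by
    simpa using (hf (hH.eigenvalues i)))).mul_mul_conjTranspose_same _
lemma hFun_trace (H : Matrix n n ℂ) (hH : H.IsHermitian) (f : ℝ → ℝ) :
    (hFun H hH f).trace = ∑ i, ((f (hH.eigenvalues i) : ℝ) : ℂ) := by
  rw [hFun, Matrix.trace_mul_cycle, star_mul_selfU, Matrix.one_mul,
    Matrix.trace_diagonal]
lemma psdSqrt_eq (A : Matrix n n ℂ) (hA : A.PosSemidef) :
    psdSqrt A = hFun A hA.1 Real.sqrt := by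
  rw [psdSqrt, dif_pos hA]
  rfl
lemma psdSqrt_psd' (A : Matrix n n ℂ) (hA : A.PosSemidef) : (psdSqrt A).PosSemidef := by
  rw [psdSqrt_eq A hA]; exact hFun_psd _ _ _ (fun x => Real.sqrt_nonneg x)
lemma psdSqrt_mul_self' (A : Matrix n n ℂ) (hA : A.PosSemidef) :
    psdSqrt A * psdSqrt A = A := by
  rw [psdSqrt_eq A hA, hFun_mul]
  conv_rhs => rw [hA.1.spectral_theorem]
  unfold hFun
  congr 3
  funext i
  simp only [Function.comp_apply, Real.mul_self_sqrt (hA.eigenvalues_nonneg i)]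
  rfl
open scoped MatrixOrder in
lemma psdSqrt_cfc (A : Matrix n n ℂ) (hA : A.PosSemidef) : psdSqrt A = CFC.sqrt A := by
  rw [CFC.sqrt_eq_real_sqrt A hA.nonneg, cfcₙ_eq_cfc (hf0 := Real.sqrt_zero),
    hA.1.cfc_eq, Matrix.IsHermitian.cfc, Unitary.conjStarAlgAut_apply, psdSqrt_eq A hA]
  rfl
open scoped MatrixOrder in
lemma psdSqrt_unique {A B : Matrix n n ℂ} (hA : A.PosSemidef) (hB : B.PosSemidef)
    (h : B ^ 2 = A) : psdSqrt A = B := by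
  rw [psdSqrt_cfc A hA]
  exact CFC.sqrt_unique (by rw [← h, pow_two]) hB.nonneg
lemma star_mul_self_mul_eq_diagonal' {H : Matrix n n ℂ} (hH : H.IsHermitian) :
    (star hH.eigenvectorUnitary : Matrix n n ℂ) * H * (hH.eigenvectorUnitary : Matrix n n ℂ)
      = Matrix.diagonal (RCLike.ofReal ∘ hH.eigenvalues) := by
  refine (congrArg (fun X => (star hH.eigenvectorUnitary : Matrix n n ℂ) * X *
    (hH.eigenvectorUnitary : Matrix n n ℂ)) hH.spectral_theorem).trans ?_
  rw [Unitary.conjStarAlgAut_apply, ← Matrix.mul_assoc, ← Matrix.mul_assoc, star_mul_selfU,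
    Matrix.one_mul, Matrix.mul_assoc, star_mul_selfU, Matrix.mul_one]
lemma matPosPart_eq (H : Matrix n n ℂ) (hH : H.IsHermitian) :
    matPosPart H = hFun H hH (fun x => max x 0) := by
  rw [matPosPart, dif_pos hH]
  rfl
lemma psd_diag_re_nonneg {M : Matrix n n ℂ} (hM : M.PosSemidef) (i : n) :
    0 ≤ (M i i).re := by
  have := hM.diag_nonneg (i := i)
  rw [Complex.le_def] at this
  simpa using this.1
lemma trace_re_eq (H : Matrix n n ℂ) (hH : H.IsHermitian) :
    (H.trace).re = ∑ i, hH.eigenvalues i := by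
  have h := hFun_trace H hH (fun x => x)
  rw [hFun_id] at h
  rw [h]
  rw [Complex.re_sum]
  simp
lemma frob_eq (H : Matrix n n ℂ) (hH : H.IsHermitian) :
    ∑ i, (hH.eigenvalues i) ^ 2 = ∑ j, ∑ k, Complex.normSq (H j k) := by
  have hm : H * H = hFun H hH (fun x => x * x) := by
    rw [← hFun_mul H hH (fun x => x) (fun x => x), hFun_id]
  have h1 : ((H * H).trace).re = ∑ i, (hH.eigenvalues i) ^ 2 := by
    rw [hm, hFun_trace, Complex.re_sum]
    simp [pow_two]
  have h2 : ((H * H).trace).re = ∑ j, ∑ k, Complex.normSq (H j k) := by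
    have he : ∀ j k, H j k * H k j = (Complex.normSq (H j k) : ℂ) := by
      intro j k
      have : H k j = star (H j k) := by
        conv_lhs => rw [← hH.eq]
        rw [Matrix.conjTranspose_apply]
      rw [this, ← Complex.mul_conj]
      rfl
    rw [Matrix.trace, Complex.re_sum]
    refine Finset.sum_congr rfl fun j _ => ?_
    rw [Matrix.diag_apply, Matrix.mul_apply, Complex.re_sum]
    refine Finset.sum_congr rfl fun k _ => ?_
    rw [he j k, Complex.ofReal_re]
  rw [← h1, h2]
lemma cs_abs (x : n → ℝ) :
    ∑ i, |x i| ≤ Real.sqrt (Fintype.card n) * Real.sqrt (∑ i, (x i) ^ 2) := by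
  have h := sq_sum_le_card_mul_sum_sq (s := Finset.univ) (f := fun i => |x i|)
  have h2 : (∑ i, |x i|) ^ 2 ≤ (Fintype.card n : ℝ) * ∑ i, (x i) ^ 2 := by
    simpa [sq_abs, Finset.card_univ] using h
  have h3 : ∑ i, |x i| = Real.sqrt ((∑ i, |x i|) ^ 2) :=
    (Real.sqrt_sq (Finset.sum_nonneg fun i _ => abs_nonneg _)).symm
  rw [h3, ← Real.sqrt_mul (by positivity)]
  exact Real.sqrt_le_sqrt h2
lemma cs_sum (x : n → ℝ) :
    |∑ i, x i| ≤ Real.sqrt (Fintype.card n) * Real.sqrt (∑ i, (x i) ^ 2) :=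
  le_trans (Finset.abs_sum_le_sum_abs _ _) (cs_abs x)
lemma sq_psd (H : Matrix n n ℂ) (hH : H.IsHermitian) : (H * H).PosSemidef := by
  have : H * H = hFun H hH (fun x => x * x) := by
    rw [← hFun_mul H hH (fun x => x) (fun x => x), hFun_id]
  rw [this]
  exact hFun_psd _ _ _ (fun x => mul_self_nonneg x)
lemma psdSqrt_sq (H : Matrix n n ℂ) (hH : H.IsHermitian) :
    psdSqrt (H * H) = hFun H hH (fun x => |x|) := by
  have h2 := sq_psd H hH
  refine psdSqrt_unique h2 (hFun_psd _ hH _ (fun x => abs_nonneg x)) ?_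
  rw [pow_two, hFun_mul]
  have : (fun x => |x| * |x|) = fun x : ℝ => x * x := by
    ext x; rw [abs_mul_abs_self]
  rw [this]
  rw [← hFun_mul H hH (fun x => x) (fun x => x), hFun_id]
lemma posPart_two (H : Matrix n n ℂ) (hH : H.IsHermitian) :
    matPosPart H + matPosPart H = psdSqrt (H * H) + H := by
  calc matPosPart H + matPosPart H
      = hFun H hH (fun x => max x 0 + max x 0) := by rw [matPosPart_eq H hH, hFun_add]
    _ = hFun H hH (fun x => |x| + x) := by
        have hfg : (fun x : ℝ => max x 0 + max x 0) = (fun x : ℝ => |x| + x) := by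
          funext x
          rcases le_total x 0 with h | h
          · rw [max_eq_right h, abs_of_nonpos h]; try ring
          · rw [max_eq_left h, abs_of_nonneg h]; try ring
        rw [hfg]
    _ = hFun H hH (fun x => |x|) + hFun H hH (fun x => x) := (hFun_add H hH _ _).symm
    _ = psdSqrt (H * H) + H := by rw [psdSqrt_sq H hH, hFun_id]
section conj
variable {m : Type*} [Fintype m] [DecidableEq m]
variable (V : Matrix m n ℂ) (hV : Vᴴ * V = 1)

lemma conj_psd {A : Matrix n n ℂ} (hA : A.PosSemidef) : (V * A * Vᴴ).PosSemidef :=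
  hA.mul_mul_conjTranspose_same V

lemma conj_herm {H : Matrix n n ℂ} (hH : H.IsHermitian) : (V * H * Vᴴ).IsHermitian := by
  unfold Matrix.IsHermitian
  simp only [Matrix.conjTranspose_mul, Matrix.conjTranspose_conjTranspose, Matrix.mul_assoc]
  rw [hH.eq]

include hV in
lemma conj_mul_conj (X Y : Matrix n n ℂ) :
    (V * X * Vᴴ) * (V * Y * Vᴴ) = V * (X * Y) * Vᴴ := by
  rw [show (V * X * Vᴴ) * (V * Y * Vᴴ) = V * X * (Vᴴ * V) * (Y * Vᴴ) by
    simp only [Matrix.mul_assoc], hV, Matrix.mul_one]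
  simp only [Matrix.mul_assoc]

include hV in
lemma trace_conj (X : Matrix n n ℂ) : (V * X * Vᴴ).trace = X.trace := by
  rw [Matrix.trace_mul_cycle, hV, Matrix.one_mul]

include hV in
lemma psdSqrt_conj {A : Matrix n n ℂ} (hA : A.PosSemidef) :
    psdSqrt (V * A * Vᴴ) = V * psdSqrt A * Vᴴ := by
  have hc := conj_psd V hA
  refine psdSqrt_unique hc (conj_psd V (psdSqrt_psd' A hA)) ?_
  rw [pow_two, conj_mul_conj V hV, psdSqrt_mul_self' A hA]

include hV in
lemma matPosPart_conj {H : Matrix n n ℂ} (hH : H.IsHermitian) :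
    matPosPart (V * H * Vᴴ) = V * matPosPart H * Vᴴ := by
  have key : matPosPart (V * H * Vᴴ) + matPosPart (V * H * Vᴴ)
      = V * matPosPart H * Vᴴ + V * matPosPart H * Vᴴ := by
    calc matPosPart (V * H * Vᴴ) + matPosPart (V * H * Vᴴ)
        = psdSqrt ((V * H * Vᴴ) * (V * H * Vᴴ)) + V * H * Vᴴ := posPart_two _ (conj_herm V hH)
      _ = V * psdSqrt (H * H) * Vᴴ + V * H * Vᴴ := by
          rw [conj_mul_conj V hV, psdSqrt_conj V hV (sq_psd H hH)]
      _ = V * (psdSqrt (H * H) + H) * Vᴴ := by rw [Matrix.mul_add, Matrix.add_mul]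
      _ = V * (matPosPart H + matPosPart H) * Vᴴ := by rw [posPart_two H hH]
      _ = V * matPosPart H * Vᴴ + V * matPosPart H * Vᴴ := by
          rw [Matrix.mul_add, Matrix.add_mul]
  have h2 : (2 : ℂ) • matPosPart (V * H * Vᴴ) = (2 : ℂ) • (V * matPosPart H * Vᴴ) := by
    rw [two_smul, two_smul]; exact key
  exact smul_right_injective _ (two_ne_zero) h2
end conj
lemma trace_uconj {W : Matrix n n ℂ} (hW : star W * W = 1) (X : Matrix n n ℂ) :
    (star W * X * W).trace = X.trace := by
  rw [Matrix.trace_mul_cycle, mul_eq_one_comm.mp hW, Matrix.one_mul]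
lemma uconj_psd {W : Matrix n n ℂ} {M : Matrix n n ℂ} (hM : M.PosSemidef) :
    (star W * M * W).PosSemidef := by
  rw [Matrix.star_eq_conjTranspose]
  exact hM.conjTranspose_mul_mul_same W

/-- Diagonal dominance: the sum of |Re diag entries| of a unitary conjugation of a
Hermitian matrix is at most the sum of |eigenvalues|. -/
lemma diag_dom (M : Matrix n n ℂ) (hM : M.IsHermitian) {W : Matrix n n ℂ}
    (hW : star W * W = 1) :
    ∑ i, |((star W * M * W) i i).re| ≤ ∑ i, |hM.eigenvalues i| := by
  set P := hFun M hM (fun x => max x 0) with hP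
  set N := hFun M hM (fun x => max (-x) 0) with hN
  have hPpsd : P.PosSemidef := hFun_psd _ _ _ (fun x => le_max_right _ _)
  have hNpsd : N.PosSemidef := hFun_psd _ _ _ (fun x => le_max_right _ _)
  have hMN : M + N = P := by
    rw [hP, hN]
    have := hFun_add M hM (fun x => x) (fun x => max (-x) 0)
    rw [hFun_id] at this
    rw [this]
    have hfg : (fun x : ℝ => x + max (-x) 0) = fun x : ℝ => max x 0 := by
      funext x
      rcases le_total x 0 with h | h
      · rw [max_eq_right h, max_eq_left (by linarith)]; ring
      · rw [max_eq_left h, max_eq_right (by linarith)]; ring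
    rw [hfg]
  have hMeq : M = P - N := by rw [← hMN]; abel
  have hsplit : ∀ i, ((star W * M * W) i i).re
      = ((star W * P * W) i i).re - ((star W * N * W) i i).re := by
    intro i
    rw [hMeq]
    have : star W * (P - N) * W = star W * P * W - star W * N * W := by
      noncomm_ring
    rw [this]
    simp [Matrix.sub_apply]
  have hbound : ∀ i, |((star W * M * W) i i).re|
      ≤ ((star W * P * W) i i).re + ((star W * N * W) i i).re := by
    intro i
    rw [hsplit i]
    have h1 := psd_diag_re_nonneg (uconj_psd (W := W) hPpsd) i
    have h2 := psd_diag_re_nonneg (uconj_psd (W := W) hNpsd) i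
    rw [abs_sub_le_iff]
    constructor <;> linarith
  calc ∑ i, |((star W * M * W) i i).re|
      ≤ ∑ i, (((star W * P * W) i i).re + ((star W * N * W) i i).re) :=
        Finset.sum_le_sum fun i _ => hbound i
    _ = ((star W * P * W).trace).re + ((star W * N * W).trace).re := by
        rw [Finset.sum_add_distrib, Matrix.trace, Matrix.trace, Complex.re_sum, Complex.re_sum]
        rfl
    _ = (P.trace).re + (N.trace).re := by rw [trace_uconj hW, trace_uconj hW]
    _ = ∑ i, (max (hM.eigenvalues i) 0 + max (-(hM.eigenvalues i)) 0) := by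
        rw [hP, hN, hFun_trace, hFun_trace, Complex.re_sum, Complex.re_sum,
          ← Finset.sum_add_distrib]
        simp
    _ = ∑ i, |hM.eigenvalues i| := by
        refine Finset.sum_congr rfl fun i _ => ?_
        rcases le_total (hM.eigenvalues i) 0 with h | h
        · rw [abs_of_nonpos h, max_eq_right h, max_eq_left (by linarith)]; ring
        · rw [abs_of_nonneg h, max_eq_left h, max_eq_right (by linarith)]; ring
lemma psdSqrt_psd (A : Matrix n n ℂ) (hA : A.PosSemidef) : (psdSqrt A).PosSemidef := by
  exact psdSqrt_psd' A hA
lemma psdSqrt_mul_self (A : Matrix n n ℂ) (hA : A.PosSemidef) :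
    psdSqrt A * psdSqrt A = A := by
  exact psdSqrt_mul_self' A hA
lemma matPosPart_psd (H : Matrix n n ℂ) (hH : H.IsHermitian) : (matPosPart H).PosSemidef := by
  rw [matPosPart_eq H hH]; exact hFun_psd _ _ _ (fun x => le_max_right _ _)
lemma posPart_sub_psd (X : Matrix n n ℂ) (hX : X.IsHermitian) :
    (matPosPart X - X).PosSemidef := by
  have h := hFun_add X hX (fun x => x) (fun x => max x 0 - x)
  rw [hFun_id] at h
  have hfg : (fun x : ℝ => x + (max x 0 - x)) = fun x : ℝ => max x 0 := by funext x; ring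
  rw [hfg, ← matPosPart_eq X hX] at h
  have : matPosPart X - X = hFun X hX (fun x => max x 0 - x) := by rw [← h]; abel
  rw [this]
  exact hFun_psd _ _ _ (fun x => by rcases le_total x 0 with h' | h' <;> simp [max_eq_right, max_eq_left, h'] <;> linarith)
lemma posPart_sub_trace (X : Matrix n n ℂ) (hX : X.IsHermitian) :
    ((matPosPart X - X).trace).re = ∑ i, (max (hX.eigenvalues i) 0 - hX.eigenvalues i) := by
  have h := hFun_add X hX (fun x => x) (fun x => max x 0 - x)
  rw [hFun_id] at h
  have hfg : (fun x : ℝ => x + (max x 0 - x)) = fun x : ℝ => max x 0 := by funext x; ring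
  rw [hfg, ← matPosPart_eq X hX] at h
  have h2 : matPosPart X - X = hFun X hX (fun x => max x 0 - x) := by rw [← h]; abel
  rw [h2, hFun_trace, Complex.re_sum]
  simp
lemma uconj_mul {W : Matrix n n ℂ} (hWW : W * star W = 1) (X Y : Matrix n n ℂ) :
    (star W * X * W) * (star W * Y * W) = star W * (X * Y) * W := by
  rw [show (star W * X * W) * (star W * Y * W) = star W * X * (W * star W) * (Y * W) by
    simp only [Matrix.mul_assoc], hWW, Matrix.mul_one]
  simp only [Matrix.mul_assoc]
theorem core (A E' : Matrix n n ℂ) (hA : A.PosSemidef) (hE : E'.IsHermitian) (t : ℝ)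
    (hEbnd : ∑ i, |hE.eigenvalues i| ≤ t) :
    |((psdSqrt A).trace).re - ((psdSqrt (matPosPart (A + E'))).trace).re|
      ≤ Real.sqrt (Fintype.card n) * Real.sqrt (2 * t) := by
  have hAE : (A + E').IsHermitian := hA.1.add hE
  set M := matPosPart (A + E') with hMdef
  have hM : M.PosSemidef := matPosPart_psd _ hAE
  set P := psdSqrt A with hPdef
  set Q := psdSqrt M with hQdef
  have hPpsd : P.PosSemidef := psdSqrt_psd _ hA
  have hQpsd : Q.PosSemidef := psdSqrt_psd _ hM
  have hPP : P * P = A := psdSqrt_mul_self _ hA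
  have hQQ : Q * Q = M := psdSqrt_mul_self _ hM
  set Δ := P - Q with hΔdef
  have hΔ : Δ.IsHermitian := hPpsd.1.sub hQpsd.1
  set δ := hΔ.eigenvalues with hδdef
  set W := (hΔ.eigenvectorUnitary : Matrix n n ℂ) with hWdef
  have hW : star W * W = 1 := star_mul_selfU Δ hΔ
  have hWW : W * star W = 1 := mul_eq_one_comm.mp hW
  have hdiag : star W * Δ * W = Matrix.diagonal (RCLike.ofReal ∘ δ) :=
    star_mul_self_mul_eq_diagonal' hΔ
  -- the conjugated difference
  set D := star W * (A - M) * W with hDdef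
  -- eigenvalue entries
  have hdiag_entry : ∀ i, ((star W * Δ * W) i i) = (δ i : ℂ) := by
    intro i; rw [hdiag]; simp [Matrix.diagonal_apply_eq]
  -- Powers-Størmer per-entry bound
  have key : ∀ i, (δ i) ^ 2 ≤ |(D i i).re| := by
    intro i
    have hAM : A - M = P * Δ + Δ * Q := by
      rw [← hPP, ← hQQ, hΔdef]; noncomm_ring
    have hsplit : D = (star W * P * W) * (star W * Δ * W) + (star W * Δ * W) * (star W * Q * W) := by
      rw [uconj_mul hWW, uconj_mul hWW, hDdef, hAM, Matrix.mul_add, Matrix.add_mul]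
    set a := ((star W * P * W) i i).re with hadef
    set b := ((star W * Q * W) i i).re with hbdef
    have hD : (D i i).re = δ i * (a + b) := by
      rw [hsplit, Matrix.add_apply, hdiag, Matrix.mul_diagonal, Matrix.diagonal_mul]
      have hc : (RCLike.ofReal ∘ δ) i = ((δ i : ℝ) : ℂ) := rfl
      rw [hc, Complex.add_re, Complex.mul_re, Complex.mul_re]
      simp only [Complex.ofReal_re, Complex.ofReal_im, hadef, hbdef]
      ring
    have hplus : 0 ≤ a + b + δ i := by
      have h2P : (P + P).PosSemidef := hPpsd.add hPpsd
      have := psd_diag_re_nonneg (uconj_psd (W := W) h2P) i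
      have hPPQ : P + P = (P + Q) + Δ := by rw [hΔdef]; abel
      rw [hPPQ] at this
      have : 0 ≤ ((star W * (P + Q) * W + star W * Δ * W) i i).re := by
        rwa [Matrix.mul_add, Matrix.add_mul] at this
      rw [Matrix.add_apply, Complex.add_re, hdiag_entry i] at this
      have hsum : ((star W * (P + Q) * W) i i).re = a + b := by
        rw [Matrix.mul_add, Matrix.add_mul, Matrix.add_apply, Complex.add_re]
      simpa [hsum, Complex.ofReal_re] using this
    have hminus : 0 ≤ a + b - δ i := by
      have h2Q : (Q + Q).PosSemidef := hQpsd.add hQpsd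
      have := psd_diag_re_nonneg (uconj_psd (W := W) h2Q) i
      have hQQΔ : Q + Q = (P + Q) - Δ := by rw [hΔdef]; abel
      rw [hQQΔ] at this
      have : 0 ≤ ((star W * (P + Q) * W - star W * Δ * W) i i).re := by
        rwa [Matrix.mul_sub, Matrix.sub_mul] at this
      rw [Matrix.sub_apply, Complex.sub_re, hdiag_entry i] at this
      have hsum : ((star W * (P + Q) * W) i i).re = a + b := by
        rw [Matrix.mul_add, Matrix.add_mul, Matrix.add_apply, Complex.add_re]
      simpa [hsum, Complex.ofReal_re] using this
    have habs : |δ i| ≤ a + b := abs_le.mpr ⟨by linarith, by linarith⟩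
    rw [hD, abs_mul]
    calc (δ i) ^ 2 = |δ i| * |δ i| := by rw [abs_mul_abs_self, pow_two]
      _ ≤ |δ i| * |a + b| := by
          apply mul_le_mul_of_nonneg_left _ (abs_nonneg _)
          exact le_trans habs (le_abs_self _)
  -- negative part correction
  set N := matPosPart (A + E') - (A + E') with hNdef
  have hNpsd : N.PosSemidef := posPart_sub_psd _ hAE
  have hAMN : A - M = -E' - N := by rw [hNdef, hMdef]; abel
  have hDperbound : ∀ i, |(D i i).re| ≤ |((star W * E' * W) i i).re| + ((star W * N * W) i i).re := by
    intro i
    have : D = -(star W * E' * W) - (star W * N * W) := by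
      rw [hDdef, hAMN]
      rw [Matrix.mul_sub, Matrix.sub_mul, Matrix.mul_neg, Matrix.neg_mul]
    rw [this, Matrix.sub_apply, Matrix.neg_apply, Complex.sub_re, Complex.neg_re]
    have hNnn := psd_diag_re_nonneg (uconj_psd (W := W) hNpsd) i
    have := abs_add_le (((star W * E' * W) i i).re) (((star W * N * W) i i).re)
    rw [abs_of_nonneg hNnn] at this
    calc |-((star W * E' * W) i i).re - ((star W * N * W) i i).re|
        = |((star W * E' * W) i i).re + ((star W * N * W) i i).re| := by rw [← abs_neg]; ring_nf
      _ ≤ |((star W * E' * W) i i).re| + ((star W * N * W) i i).re := this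
  -- trace of N bounded by eigenvalue sum of E'
  have hNtrace : ((star W * N * W).trace).re ≤ ∑ i, |hE.eigenvalues i| := by
    rw [trace_uconj hW]
    set U := (hAE.eigenvectorUnitary : Matrix n n ℂ) with hUdef
    have hU : star U * U = 1 := star_mul_selfU _ hAE
    have hdiagU : star U * (A + E') * U = Matrix.diagonal (RCLike.ofReal ∘ hAE.eigenvalues) :=
      star_mul_self_mul_eq_diagonal' hAE
    have hper : ∀ i, max (hAE.eigenvalues i) 0 - hAE.eigenvalues i
        ≤ |((star U * E' * U) i i).re| := by
      intro i
      have hμ : ((star U * A * U) i i).re + ((star U * E' * U) i i).re = hAE.eigenvalues i := by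
        have h0 : ((star U * (A + E') * U) i i) = ((hAE.eigenvalues i : ℝ) : ℂ) := by
          rw [hdiagU]
          have hc : (RCLike.ofReal ∘ hAE.eigenvalues) i = ((hAE.eigenvalues i : ℝ) : ℂ) := rfl
          rw [← hc, Matrix.diagonal_apply_eq]
        rw [Matrix.mul_add, Matrix.add_mul, Matrix.add_apply] at h0
        have h1 := congrArg Complex.re h0
        rwa [Complex.add_re, Complex.ofReal_re] at h1
      have ha := psd_diag_re_nonneg (uconj_psd (W := U) hA) i
      rcases le_total 0 (hAE.eigenvalues i) with h | h
      · rw [max_eq_left h]; simp [abs_nonneg]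
      · rw [max_eq_right h]
        have := neg_le_abs (((star U * E' * U) i i).re)
        linarith
    calc ((N.trace)).re = ∑ i, (max (hAE.eigenvalues i) 0 - hAE.eigenvalues i) :=
          posPart_sub_trace _ hAE
      _ ≤ ∑ i, |((star U * E' * U) i i).re| := Finset.sum_le_sum fun i _ => hper i
      _ ≤ ∑ i, |hE.eigenvalues i| := diag_dom E' hE hU
  -- sum of squares bound
  have hsumsq : ∑ i, (δ i) ^ 2 ≤ 2 * t := by
    have h1 : ∑ i, (δ i) ^ 2 ≤ ∑ i, |(D i i).re| := Finset.sum_le_sum fun i _ => key i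
    have h2 : ∑ i, |(D i i).re|
        ≤ ∑ i, |((star W * E' * W) i i).re| + ∑ i, ((star W * N * W) i i).re := by
      rw [← Finset.sum_add_distrib]
      exact Finset.sum_le_sum fun i _ => hDperbound i
    have h3 : ∑ i, ((star W * N * W) i i).re = ((star W * N * W).trace).re := by
      rw [Matrix.trace, Complex.re_sum]; rfl
    have h4 := diag_dom E' hE hW
    linarith [hNtrace]
  -- conclusion via Cauchy-Schwarz
  have hgoal : P.trace.re - Q.trace.re = ∑ i, δ i := by
    have h1 : Δ.trace.re = ∑ i, δ i := by
      rw [hδdef]; exact trace_re_eq Δ hΔ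
    rw [← h1, hΔdef, Matrix.trace_sub, Complex.sub_re]
  show |P.trace.re - Q.trace.re| ≤ _
  rw [hgoal]
  calc |∑ i, δ i| ≤ Real.sqrt (Fintype.card n) * Real.sqrt (∑ i, (δ i) ^ 2) := cs_sum δ
    _ ≤ Real.sqrt (Fintype.card n) * Real.sqrt (2 * t) := by
        apply mul_le_mul_of_nonneg_left (Real.sqrt_le_sqrt hsumsq) (Real.sqrt_nonneg _)
end Pf

open Pf in
/-- **Perturbation bound for the fidelity estimate** (core of Theorem 6 of
"Quantum Tomography via Compressed Sensing").

With `G = ∑_{j,k} √(λ_j λ_k) ⟨φ_j, ρ φ_k⟩ |φ_j⟩⟨φ_k|` and error matrix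
`E = ∑_{j,k} √(λ_j λ_k) ε_{jk} |φ_j⟩⟨φ_k|` built from Hermitian-symmetric errors
with `|ε_{jk}| ≤ ε₀`, one has `|Tr √G - Tr √([G+E]₊)| ≤ r^(3/4) √(2ε₀)`. -/
theorem fidelity_estimate_perturbation_bound
    {d r : ℕ} (hr : 1 ≤ r)
    (φ : Fin r → (Fin d → ℂ))
    (horth : ∀ j k, star (φ j) ⬝ᵥ φ k = if j = k then 1 else 0)
    (l : Fin r → ℝ) (hl0 : ∀ j, 0 ≤ l j) (hl1 : ∑ j, l j ≤ 1)
    (ρ : Matrix (Fin d) (Fin d) ℂ) (hρ : ρ.PosSemidef)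
    (ε₀ : ℝ) (hε₀ : 0 < ε₀)
    (e : Fin r → Fin r → ℂ)
    (hherm : ∀ j k, e k j = starRingEnd ℂ (e j k))
    (hbnd : ∀ j k, ‖e j k‖ ≤ ε₀)
    (G E : Matrix (Fin d) (Fin d) ℂ)
    (hG : G = ∑ j, ∑ k, ((Real.sqrt (l j * l k) : ℂ) *
      (star (φ j) ⬝ᵥ ρ *ᵥ φ k)) • Matrix.vecMulVec (φ j) (star (φ k)))
    (hE : E = ∑ j, ∑ k, ((Real.sqrt (l j * l k) : ℂ) * e j k) •
      Matrix.vecMulVec (φ j) (star (φ k))) :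
    |((psdSqrt G).trace).re - ((psdSqrt (matPosPart (G + E))).trace).re| ≤
      (r : ℝ) ^ ((3 : ℝ) / 4) * Real.sqrt (2 * ε₀) := by
  -- the isometry whose columns are the φ's
  set V : Matrix (Fin d) (Fin r) ℂ := Matrix.of (fun i j => φ j i) with hVdef
  have hV : Vᴴ * V = 1 := by
    ext j k
    rw [Matrix.mul_apply, Matrix.one_apply]
    have := horth j k
    rw [dotProduct] at this
    simpa [hVdef, Matrix.conjTranspose_apply] using this
  -- compressed matrices
  set Gt : Matrix (Fin r) (Fin r) ℂ :=
    Matrix.of (fun j k => ((Real.sqrt (l j * l k) : ℂ) * (star (φ j) ⬝ᵥ ρ *ᵥ φ k))) with hGtdef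
  set Et : Matrix (Fin r) (Fin r) ℂ :=
    Matrix.of (fun j k => ((Real.sqrt (l j * l k) : ℂ) * e j k)) with hEtdef
  -- G and E as conjugations
  have hGr : G = V * Gt * Vᴴ := by
    rw [hG]
    ext a b
    simp only [Matrix.sum_apply, Matrix.smul_apply, Matrix.vecMulVec_apply, smul_eq_mul,
      Matrix.mul_apply, Matrix.conjTranspose_apply, Matrix.of_apply, Finset.sum_mul,
      Pi.star_apply, RCLike.star_def, hVdef, hGtdef]
    rw [Finset.sum_comm]
    refine Finset.sum_congr rfl fun k _ => ?_
    refine Finset.sum_congr rfl fun j _ => ?_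
    ring
  have hEr : E = V * Et * Vᴴ := by
    rw [hE]
    ext a b
    simp only [Matrix.sum_apply, Matrix.smul_apply, Matrix.vecMulVec_apply, smul_eq_mul,
      Matrix.mul_apply, Matrix.conjTranspose_apply, Matrix.of_apply, Finset.sum_mul,
      Pi.star_apply, RCLike.star_def, hVdef, hEtdef]
    rw [Finset.sum_comm]
    refine Finset.sum_congr rfl fun k _ => ?_
    refine Finset.sum_congr rfl fun j _ => ?_
    ring
  -- Gt is PSD
  have hmidentry : ∀ j k, (Vᴴ * ρ * V) j k = star (φ j) ⬝ᵥ ρ *ᵥ φ k := by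
    intro j k
    simp only [Matrix.mul_apply, Matrix.conjTranspose_apply, Matrix.of_apply, hVdef,
      dotProduct, Matrix.mulVec, Pi.star_apply, Finset.sum_mul, Finset.mul_sum]
    rw [Finset.sum_comm]
    refine Finset.sum_congr rfl fun a _ => Finset.sum_congr rfl fun b _ => ?_
    ring
  have hGtpsd : Gt.PosSemidef := by
    have hmid : (Vᴴ * ρ * V).PosSemidef := hρ.conjTranspose_mul_mul_same V
    have hdd : Gt = (Matrix.diagonal (fun j => ((Real.sqrt (l j) : ℝ) : ℂ)))ᴴ *
        (Vᴴ * ρ * V) * (Matrix.diagonal (fun j => ((Real.sqrt (l j) : ℝ) : ℂ))) := by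
      rw [Matrix.diagonal_conjTranspose]
      ext j k
      rw [Matrix.mul_diagonal, Matrix.diagonal_mul, hmidentry j k, hGtdef]
      simp only [Matrix.of_apply, Pi.star_apply, RCLike.star_def, Complex.conj_ofReal]
      rw [Real.sqrt_mul (hl0 j), Complex.ofReal_mul]
      ring
    rw [hdd]
    exact hmid.conjTranspose_mul_mul_same _
  -- Et is Hermitian
  have hEth : Et.IsHermitian := by
    unfold Matrix.IsHermitian
    ext j k
    rw [Matrix.conjTranspose_apply, hEtdef]
    simp only [Matrix.of_apply, star_mul', RCLike.star_def]
    rw [hherm j k]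
    simp only [Complex.conj_conj, Complex.conj_ofReal]
    rw [mul_comm (l k) (l j)]
  -- eigenvalue bound for Et
  have hEtbnd : ∑ i, |hEth.eigenvalues i| ≤ Real.sqrt r * ε₀ := by
    have h1 : ∑ j, ∑ k, Complex.normSq (Et j k) ≤ ε₀ ^ 2 := by
      have hper : ∀ j k, Complex.normSq (Et j k) ≤ l j * l k * ε₀ ^ 2 := by
        intro j k
        rw [hEtdef]
        simp only [Matrix.of_apply, Complex.normSq_mul, Complex.normSq_ofReal]
        rw [Real.mul_self_sqrt (mul_nonneg (hl0 j) (hl0 k))]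
        have : Complex.normSq (e j k) ≤ ε₀ ^ 2 := by
          rw [Complex.normSq_eq_norm_sq]
          exact pow_le_pow_left₀ (norm_nonneg _) (hbnd j k) 2
        have hlk : 0 ≤ l j * l k := mul_nonneg (hl0 j) (hl0 k)
        exact mul_le_mul_of_nonneg_left this hlk
      calc ∑ j, ∑ k, Complex.normSq (Et j k) ≤ ∑ j, ∑ k, l j * l k * ε₀ ^ 2 :=
            Finset.sum_le_sum fun j _ => Finset.sum_le_sum fun k _ => hper j k
        _ = (∑ j, l j) ^ 2 * ε₀ ^ 2 := by
            rw [pow_two (∑ j, l j), Finset.sum_mul_sum, Finset.sum_mul]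
            refine Finset.sum_congr rfl fun j _ => ?_
            rw [Finset.sum_mul]
        _ ≤ 1 * ε₀ ^ 2 := by
            have h0 : 0 ≤ ∑ j, l j := Finset.sum_nonneg fun j _ => hl0 j
            have h2 : (∑ j, l j) ^ 2 ≤ 1 := by nlinarith
            exact mul_le_mul_of_nonneg_right h2 (sq_nonneg ε₀)
        _ = ε₀ ^ 2 := one_mul _
    calc ∑ i, |hEth.eigenvalues i|
        ≤ Real.sqrt (Fintype.card (Fin r)) * Real.sqrt (∑ i, (hEth.eigenvalues i) ^ 2) :=
          cs_abs _
      _ ≤ Real.sqrt r * ε₀ := by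
          rw [Fintype.card_fin]
          apply mul_le_mul_of_nonneg_left _ (Real.sqrt_nonneg _)
          rw [frob_eq Et hEth]
          calc Real.sqrt (∑ j, ∑ k, Complex.normSq (Et j k)) ≤ Real.sqrt (ε₀ ^ 2) :=
              Real.sqrt_le_sqrt h1
            _ = ε₀ := Real.sqrt_sq hε₀.le
  -- apply the core bound
  have hcore := core Gt Et hGtpsd hEth (Real.sqrt r * ε₀) hEtbnd
  -- transport traces through the isometry
  have hT1 : ((psdSqrt G).trace) = ((psdSqrt Gt).trace) := by
    rw [hGr, psdSqrt_conj V hV hGtpsd, trace_conj V hV]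
  have hGE : G + E = V * (Gt + Et) * Vᴴ := by
    rw [hGr, hEr, Matrix.mul_add, Matrix.add_mul]
  have hT2 : ((psdSqrt (matPosPart (G + E))).trace) = ((psdSqrt (matPosPart (Gt + Et))).trace) := by
    rw [hGE, matPosPart_conj V hV (hGtpsd.1.add hEth),
      psdSqrt_conj V hV (matPosPart_psd _ (hGtpsd.1.add hEth)), trace_conj V hV]
  rw [hT1, hT2]
  -- arithmetic
  have harith : Real.sqrt (Fintype.card (Fin r)) * Real.sqrt (2 * (Real.sqrt r * ε₀))
      = (r : ℝ) ^ ((3 : ℝ) / 4) * Real.sqrt (2 * ε₀) := by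
    have hr0 : (0 : ℝ) ≤ (r : ℝ) := Nat.cast_nonneg r
    have hrpos : (0 : ℝ) < (r : ℝ) := by
      have : (1 : ℝ) ≤ (r : ℝ) := by exact_mod_cast hr
      linarith
    have h1 : 2 * (Real.sqrt r * ε₀) = Real.sqrt r * (2 * ε₀) := by ring
    rw [Fintype.card_fin, h1, Real.sqrt_mul (Real.sqrt_nonneg _), ← mul_assoc]
    congr 1
    rw [Real.sqrt_eq_rpow, Real.sqrt_eq_rpow, ← Real.rpow_mul hr0, ← Real.rpow_add hrpos]
    norm_num
  calc |((psdSqrt Gt).trace).re - ((psdSqrt (matPosPart (Gt + Et))).trace).re|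
      ≤ Real.sqrt (Fintype.card (Fin r)) * Real.sqrt (2 * (Real.sqrt r * ε₀)) := hcore
    _ = (r : ℝ) ^ ((3 : ℝ) / 4) * Real.sqrt (2 * ε₀) := harith
end
end

section
/- Let n ≥ 1, d = 2ⁿ, let {P_s : s ∈ {0,1,2,3}ⁿ} be the n-qubit Pauli matrices, let ρ be a d×d Hermitian matrix, and let φ, ψ be unit vectors in ℂ^d. Define the probability weights Pr(s) = |⟨φ, P_s ψ⟩|²/d (which sum to 1 since φ, ψ are unit vectors) and, on the support {s : ⟨ψ, P_s φ⟩ ≠ 0}, the estimator value X_s = Tr(P_s ρ)/⟨ψ, P_s φ⟩. Then: (i) the estimator is unbiased, Σ_{s : ⟨ψ,P_sφ⟩ ≠ 0} Pr(s)·X_s = ⟨φ, ρ ψ⟩; and (ii) its second moment satisfies Σ_{s : ⟨ψ,P_sφ⟩ ≠ 0} Pr(s)·|X_s|² ≤ Tr(ρ²). In particular, if Tr(ρ²) ≤ 1 then the variance of the estimator is at most 1. -/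
open scoped ComplexOrder Matrix BigOperators Kronecker
open MeasureTheory

noncomputable section

/-- The four 2×2 Pauli matrices `I, X, Y, Z`. -/
def pauliσ : Fin 4 → Matrix (Fin 2) (Fin 2) ℂ
  | 0 => !![1, 0; 0, 1]
  | 1 => !![0, 1; 1, 0]
  | 2 => !![0, -Complex.I; Complex.I, 0]
  | 3 => !![1, 0; 0, -1]

/-- The `n`-qubit Pauli matrix `P_s = σ_{s 1} ⊗ ⋯ ⊗ σ_{s n}` (Kronecker product),
realized as a matrix indexed by `Fin n → Fin 2` (a space of dimension `2^n`). -/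
def pauli {n : ℕ} (s : Fin n → Fin 4) : Matrix (Fin n → Fin 2) (Fin n → Fin 2) ℂ :=
  fun x y => ∏ i, pauliσ (s i) (x i) (y i)

lemma pauliσ_conj (k : Fin 4) (x y : Fin 2) :
    (starRingEnd ℂ) (pauliσ k x y) = pauliσ k y x := by
  fin_cases k <;> fin_cases x <;> fin_cases y <;> simp [pauliσ]

lemma pauliσ_sum (x y z w : Fin 2) :
    ∑ k : Fin 4, pauliσ k x y * pauliσ k z w =
      if x = w ∧ y = z then 2 else 0 := by
  fin_cases x <;> fin_cases y <;> fin_cases z <;> fin_cases w <;>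
    simp [pauliσ, Fin.sum_univ_four, Complex.I_mul_I] <;> norm_num

lemma pauli_isHermitian {n : ℕ} (s : Fin n → Fin 4) : (pauli s).IsHermitian := by
  ext x y
  simp only [Matrix.conjTranspose_apply, pauli, star_prod]
  exact Finset.prod_congr rfl fun i _ => pauliσ_conj (s i) (y i) (x i)

lemma pauli_sum {n : ℕ} (x y z w : Fin n → Fin 2) :
    ∑ s : Fin n → Fin 4, pauli s x y * pauli s z w =
      if x = w ∧ y = z then ((2 : ℂ) ^ n) else 0 := by
  classical
  have h : ∀ s : Fin n → Fin 4, pauli s x y * pauli s z w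
      = ∏ i, (pauliσ (s i) (x i) (y i) * pauliσ (s i) (z i) (w i)) := by
    intro s; rw [pauli, pauli, ← Finset.prod_mul_distrib]
  simp_rw [h]
  rw [← Fintype.prod_sum (fun i (k : Fin 4) => pauliσ k (x i) (y i) * pauliσ k (z i) (w i))]
  simp_rw [pauliσ_sum]
  by_cases hc : x = w ∧ y = z
  · obtain ⟨hx, hy⟩ := hc
    subst hx; subst hy
    simp
  · rw [if_neg hc]
    have : ∃ i, ¬(x i = w i ∧ y i = z i) := by
      by_contra hcc
      push_neg at hcc
      exact hc ⟨funext fun i => (hcc i).1, funext fun i => (hcc i).2⟩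
    obtain ⟨i, hi⟩ := this
    exact Finset.prod_eq_zero (Finset.mem_univ i) (if_neg hi)

lemma trace_mul_vecMulVec {m : Type*} [Fintype m] (C : Matrix m m ℂ) (v u : m → ℂ) :
    (C * Matrix.vecMulVec v u).trace = u ⬝ᵥ C *ᵥ v := by
  simp only [Matrix.trace, Matrix.diag, Matrix.mul_apply, Matrix.vecMulVec_apply,
    dotProduct, Matrix.mulVec, Finset.mul_sum]
  exact Finset.sum_congr rfl fun x _ => Finset.sum_congr rfl fun y _ => by ring

lemma pauli_trace_mul {n : ℕ} (A B : Matrix (Fin n → Fin 2) (Fin n → Fin 2) ℂ) :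
    ∑ s : Fin n → Fin 4, (pauli s * A).trace * (pauli s * B).trace
      = (2 : ℂ) ^ n * (A * B).trace := by
  classical
  have htr : ∀ (C : Matrix (Fin n → Fin 2) (Fin n → Fin 2) ℂ) (s : Fin n → Fin 4),
      (pauli s * C).trace = ∑ p : (Fin n → Fin 2) × (Fin n → Fin 2),
        pauli s p.1 p.2 * C p.2 p.1 := by
    intro C s
    rw [Fintype.sum_prod_type]
    simp [Matrix.trace, Matrix.diag, Matrix.mul_apply]
  simp_rw [htr, Finset.sum_mul_sum]
  rw [Finset.sum_comm]
  have key : ∀ p : (Fin n → Fin 2) × (Fin n → Fin 2),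
      ∑ s : Fin n → Fin 4, ∑ q : (Fin n → Fin 2) × (Fin n → Fin 2),
        (pauli s p.1 p.2 * A p.2 p.1) * (pauli s q.1 q.2 * B q.2 q.1)
      = (2:ℂ)^n * (A p.2 p.1 * B p.1 p.2) := by
    intro p
    rw [Finset.sum_comm]
    have : ∀ q : (Fin n → Fin 2) × (Fin n → Fin 2),
        ∑ s : Fin n → Fin 4, (pauli s p.1 p.2 * A p.2 p.1) * (pauli s q.1 q.2 * B q.2 q.1)
        = (if p.1 = q.2 ∧ p.2 = q.1 then (2:ℂ)^n else 0) * (A p.2 p.1 * B q.2 q.1) := by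
      intro q
      rw [← pauli_sum p.1 p.2 q.1 q.2, Finset.sum_mul]
      exact Finset.sum_congr rfl fun s _ => by ring
    simp_rw [this]
    rw [Finset.sum_eq_single (p.2, p.1)]
    · simp
    · intro q _ hq
      rw [if_neg, zero_mul]
      rintro ⟨h1, h2⟩
      exact hq (Prod.ext h2.symm h1.symm)
    · intro h; exact absurd (Finset.mem_univ _) h
  simp_rw [key]
  rw [← Finset.mul_sum]
  congr 1
  rw [Fintype.sum_prod_type]
  simp only [Matrix.trace, Matrix.diag, Matrix.mul_apply]
  rw [Finset.sum_comm]

lemma dot_herm {m : Type*} [Fintype m] (P : Matrix m m ℂ) (hP : P.IsHermitian)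
    (φ ψ : m → ℂ) :
    star ψ ⬝ᵥ P *ᵥ φ = (starRingEnd ℂ) (star φ ⬝ᵥ P *ᵥ ψ) := by
  have hent : ∀ x y, (starRingEnd ℂ) (P x y) = P y x := by
    intro x y
    have := congrFun (congrFun hP y) x
    simpa [Matrix.conjTranspose_apply] using this
  simp only [Matrix.mulVec, dotProduct, map_sum, map_mul, Pi.star_apply,
    Complex.star_def, Complex.conj_conj, hent, Finset.mul_sum]
  rw [Finset.sum_comm]
  exact Finset.sum_congr rfl fun x _ => Finset.sum_congr rfl fun y _ => by ring

lemma trace_pauli_herm_real {n : ℕ} (s : Fin n → Fin 4)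
    (ρ : Matrix (Fin n → Fin 2) (Fin n → Fin 2) ℂ) (hρ : ρ.IsHermitian) :
    (starRingEnd ℂ) ((pauli s * ρ).trace) = (pauli s * ρ).trace := by
  have : (starRingEnd ℂ) ((pauli s * ρ).trace) = ((pauli s * ρ)ᴴ).trace := by
    rw [Matrix.trace_conjTranspose]; rfl
  rw [this, Matrix.conjTranspose_mul, hρ.eq, (pauli_isHermitian s).eq,
    Matrix.trace_mul_comm]

open Classical in
/-- **Direct fidelity estimation for non-Hermitian rank-one observables**
(Section IV of "Quantum Tomography via Compressed Sensing").

Sampling Pauli labels `s` with probability `Pr(s) = |⟨φ, P_s ψ⟩|²/d` and using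
the estimator `X_s = Tr(P_s ρ)/⟨ψ, P_s φ⟩` on its support: the estimator is
unbiased with mean `⟨φ, ρ ψ⟩`, and its second moment is at most `Tr(ρ²)`. -/
theorem dfe_rank_one_unbiased_and_second_moment
    {n : ℕ} (hn : 1 ≤ n)
    (ρ : Matrix (Fin n → Fin 2) (Fin n → Fin 2) ℂ) (hρ : ρ.IsHermitian)
    (φ ψ : (Fin n → Fin 2) → ℂ)
    (hφ : ∑ x, ‖φ x‖ ^ 2 = 1) (hψ : ∑ x, ‖ψ x‖ ^ 2 = 1) :
    (∑ s ∈ Finset.univ.filter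
        (fun s : Fin n → Fin 4 => star ψ ⬝ᵥ pauli s *ᵥ φ ≠ 0),
        ((‖star φ ⬝ᵥ pauli s *ᵥ ψ‖ ^ 2 / (2 ^ n : ℝ) : ℝ) : ℂ) *
          ((pauli s * ρ).trace / (star ψ ⬝ᵥ pauli s *ᵥ φ)) =
      star φ ⬝ᵥ ρ *ᵥ ψ) ∧
    (∑ s ∈ Finset.univ.filter
        (fun s : Fin n → Fin 4 => star ψ ⬝ᵥ pauli s *ᵥ φ ≠ 0),
        (‖star φ ⬝ᵥ pauli s *ᵥ ψ‖ ^ 2 / (2 ^ n : ℝ)) *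
          ‖(pauli s * ρ).trace / (star ψ ⬝ᵥ pauli s *ᵥ φ)‖ ^ 2 ≤
      ((ρ * ρ).trace).re) := by
  have hdR : ((2:ℝ)^n) ≠ 0 := by positivity
  have hdC : ((2:ℂ)^n) ≠ 0 := by
    norm_num
  set a : (Fin n → Fin 4) → ℂ := fun s => star φ ⬝ᵥ pauli s *ᵥ ψ with ha
  have hb : ∀ s, star ψ ⬝ᵥ pauli s *ᵥ φ = (starRingEnd ℂ) (a s) :=
    fun s => dot_herm _ (pauli_isHermitian s) φ ψ
  set T : (Fin n → Fin 4) → ℂ := fun s => (pauli s * ρ).trace with hT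
  constructor
  · have hterm : ∀ s, (pauli s * Matrix.vecMulVec ψ (star φ)).trace = a s :=
      fun s => trace_mul_vecMulVec _ _ _
    have htr2 : (ρ * Matrix.vecMulVec ψ (star φ)).trace = star φ ⬝ᵥ ρ *ᵥ ψ :=
      trace_mul_vecMulVec _ _ _
    have hkey := pauli_trace_mul ρ (Matrix.vecMulVec ψ (star φ))
    simp_rw [hterm, htr2] at hkey
    rw [Finset.sum_filter]
    have hpt : ∀ s : Fin n → Fin 4,
        (if star ψ ⬝ᵥ pauli s *ᵥ φ ≠ 0 then
          ((‖star φ ⬝ᵥ pauli s *ᵥ ψ‖ ^ 2 / (2 ^ n : ℝ) : ℝ) : ℂ) *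
            ((pauli s * ρ).trace / (star ψ ⬝ᵥ pauli s *ᵥ φ)) else 0)
        = T s * a s / (2:ℂ)^n := by
      intro s
      by_cases hs : star ψ ⬝ᵥ pauli s *ᵥ φ = 0
      · rw [if_neg (not_not_intro hs)]
        have ha0 : a s = 0 := by
          have h1 := (hb s).symm.trans hs
          simpa using congrArg (starRingEnd ℂ) h1
        rw [ha0, mul_zero, zero_div]
      · rw [if_pos hs]
        rw [hb s] at hs ⊢
        have hnorm : ((‖star φ ⬝ᵥ pauli s *ᵥ ψ‖ ^ 2 / (2 ^ n : ℝ) : ℝ) : ℂ)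
            = a s * (starRingEnd ℂ) (a s) / (2:ℂ)^n := by
          rw [Complex.ofReal_div]
          congr 1
          · rw [Complex.mul_conj]
            norm_cast
            rw [← Complex.sq_norm]
          · push_cast; ring
        rw [hnorm]
        field_simp
        ring
    simp_rw [hpt]
    rw [← Finset.sum_div]
    simp_rw [hT]
    rw [hkey]
    field_simp
  · have hle : ∑ s ∈ Finset.univ.filter
        (fun s : Fin n → Fin 4 => star ψ ⬝ᵥ pauli s *ᵥ φ ≠ 0),
        (‖star φ ⬝ᵥ pauli s *ᵥ ψ‖ ^ 2 / (2 ^ n : ℝ)) *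
          ‖(pauli s * ρ).trace / (star ψ ⬝ᵥ pauli s *ᵥ φ)‖ ^ 2
        = ∑ s ∈ Finset.univ.filter
        (fun s : Fin n → Fin 4 => star ψ ⬝ᵥ pauli s *ᵥ φ ≠ 0),
          ‖T s‖ ^ 2 / (2:ℝ)^n := by
      refine Finset.sum_congr rfl fun s hs => ?_
      rw [Finset.mem_filter] at hs
      have hs' := hs.2
      rw [hb s] at hs' ⊢
      have hna : ‖(starRingEnd ℂ) (a s)‖ ≠ 0 := by simpa using hs'
      rw [norm_div, div_pow, RingHomIsometric.norm_map]
      have hnn : ‖a s‖ ≠ 0 := by simpa using hna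
      have habs : ‖star φ ⬝ᵥ pauli s *ᵥ ψ‖ ≠ 0 := by
        simpa using hnn
      field_simp [habs]
      simp only [hT, ha]
    rw [hle]
    have hle2 : ∑ s ∈ Finset.univ.filter
        (fun s : Fin n → Fin 4 => star ψ ⬝ᵥ pauli s *ᵥ φ ≠ 0),
          ‖T s‖ ^ 2 / (2:ℝ)^n ≤ ∑ s : Fin n → Fin 4, ‖T s‖ ^ 2 / (2:ℝ)^n := by
      refine Finset.sum_le_sum_of_subset_of_nonneg (Finset.filter_subset _ _) ?_
      intro s _ _
      positivity
    refine hle2.trans_eq ?_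
    have hreal : ∀ s, (starRingEnd ℂ) (T s) = T s :=
      fun s => trace_pauli_herm_real s ρ hρ
    have him : ∀ s, (T s).im = 0 := fun s => Complex.conj_eq_iff_im.mp (hreal s)
    have hnrm : ∀ s, ‖T s‖^2 = (T s * T s).re := by
      intro s
      rw [Complex.mul_re, him s, mul_zero, sub_zero,
        Complex.sq_norm, Complex.normSq_apply, him s, mul_zero, add_zero]
    have h2 : ∑ s : Fin n → Fin 4, T s * T s = (2:ℂ)^n * (ρ*ρ).trace :=
      pauli_trace_mul ρ ρ
    simp_rw [hnrm]
    rw [← Finset.sum_div, ← Complex.re_sum, h2]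
    have : ((2:ℂ)^n) = (((2:ℝ)^n : ℝ) : ℂ) := by push_cast; ring
    rw [this, Complex.re_ofReal_mul]
    field_simp
end
end
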